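/- arXiv:2207.05564 — 2 statements merged into one kernel-verified Lean document; each statement's English description precedes it below -/
import Mathlib

section
/- The number of projective linear arrangements of a rooted tree T^r on n vertices equals the product over all vertices u of (d_out(u) + 1)!, where d_out(u) is the out-degree (number of children) of u. -/
open Finset

attribute [local instance] Classical.propDecidable

/-- An arrangement `π` of the vertices of `G` is planar if no two edges cross. -/
def IsPlanarArr {n : ℕ} (G : SimpleGraph (Fin n)) (π : Equiv.Perm (Fin n)) : Prop :=
  ∀ s t u v : Fin n, G.Adj s t → G.Adj u v →
    ¬ (π s < π u ∧ π u < π t ∧ π t < π v)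

/-- An arrangement of `G` rooted at `r` is projective if it is planar and no edge covers `r`. -/
def IsProjectiveArr {n : ℕ} (G : SimpleGraph (Fin n)) (r : Fin n) (π : Equiv.Perm (Fin n)) : Prop :=
  IsPlanarArr G π ∧ ∀ s t : Fin n, G.Adj s t → ¬ (π s < π r ∧ π r < π t)

/-- The set of vertices of the subtree rooted at `u` when `G` is rooted at `r`. -/
noncomputable def subtreeFinset {n : ℕ} (G : SimpleGraph (Fin n)) (r u : Fin n) : Finset (Fin n) :=
  univ.filter (fun v => G.dist r v = G.dist r u + G.dist u v)

/-- Directional size `s_r(u)`: size of the subtree rooted at `u` when `G` is rooted at `r`. -/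
noncomputable def subtreeSize {n : ℕ} (G : SimpleGraph (Fin n)) (r u : Fin n) : ℕ :=
  (subtreeFinset G r u).card

/-- Out-degree (number of children) of `u` in `G` rooted at `r`. -/
noncomputable def outDeg {n : ℕ} (G : SimpleGraph (Fin n)) (r u : Fin n) : ℕ :=
  (univ.filter (fun v => G.Adj u v ∧ G.dist r v = G.dist r u + 1)).card

/-- The sum of edge lengths of `G` in the arrangement `π`. -/
noncomputable def Dsum {n : ℕ} (G : SimpleGraph (Fin n)) (π : Equiv.Perm (Fin n)) : ℤ :=
  ∑ e ∈ G.edgeFinset,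
    Sym2.lift ⟨fun u v => |((π u : ℕ) : ℤ) - ((π v : ℕ) : ℤ)|,
      fun u v => abs_sub_comm _ _⟩ e

/-- The set of planar arrangements of `G`. -/
noncomputable def planarSet {n : ℕ} (G : SimpleGraph (Fin n)) : Finset (Equiv.Perm (Fin n)) :=
  univ.filter (IsPlanarArr G)

/-- The set of projective arrangements of `G` rooted at `r`. -/
noncomputable def projSet {n : ℕ} (G : SimpleGraph (Fin n)) (r : Fin n) :
    Finset (Equiv.Perm (Fin n)) :=
  univ.filter (IsProjectiveArr G r)

/-- The set of projective arrangements of `G` rooted at `r` with `r` in the first position. -/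
noncomputable def projSet1 {n : ℕ} (G : SimpleGraph (Fin n)) (r : Fin n) :
    Finset (Equiv.Perm (Fin n)) :=
  univ.filter (fun π => IsProjectiveArr G r π ∧ (π r : ℕ) = 0)


namespace ProjArr
open SimpleGraph

variable {n : ℕ} {G : SimpleGraph (Fin n)} {r : Fin n}

lemma walk_cross (P : Fin n → Prop) : ∀ {u v : Fin n} (p : G.Walk u v), P u → ¬ P v →
    ∃ a b, G.Adj a b ∧ a ∈ p.support ∧ b ∈ p.support ∧ P a ∧ ¬ P b := by
  intro u v p
  induction p with
  | nil => intro h h'; exact absurd h h'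
  | @cons u v' w h q ih =>
      intro hu hv
      by_cases h2 : P v'
      · obtain ⟨a, b, hab, ha, hb, hPa, hPb⟩ := ih h2 hv
        exact ⟨a, b, hab, by simp [ha], by simp [hb], hPa, hPb⟩
      · exact ⟨u, v', h, by simp, by simp, hu, h2⟩

lemma adj_dist_le (h : G.Adj u v) : G.dist u v ≤ 1 := by
  simpa using G.dist_le (SimpleGraph.Walk.cons h SimpleGraph.Walk.nil)

lemma dist_getVert_le (hc : G.Connected) :
    ∀ {u v : Fin n} (p : G.Walk u v) (i : ℕ), G.dist u (p.getVert i) ≤ i := by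
  intro u v p
  induction p with
  | nil => intro i; simp [SimpleGraph.Walk.getVert, SimpleGraph.dist_self]
  | @cons u v' w h q ih =>
      intro i
      match i with
      | 0 => simp [SimpleGraph.dist_self]
      | (i+1) =>
        rw [SimpleGraph.Walk.getVert_cons_succ]
        calc G.dist u (q.getVert i) ≤ G.dist u v' + G.dist v' (q.getVert i) := hc.dist_triangle
        _ ≤ 1 + i := by
              have := ih i
              have := adj_dist_le h
              omega
        _ = i + 1 := by omega

lemma getVert_dist_le :
    ∀ {u v : Fin n} (p : G.Walk u v) (i : ℕ), G.dist (p.getVert i) v ≤ p.length - i := by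
  intro u v p
  induction p with
  | nil => intro i; simp [SimpleGraph.Walk.getVert, SimpleGraph.dist_self]
  | @cons u v' w h q ih =>
      intro i
      match i with
      | 0 =>
        have := G.dist_le (SimpleGraph.Walk.cons h q)
        simpa using this
      | (i+1) =>
        rw [SimpleGraph.Walk.getVert_cons_succ]
        have := ih i
        simpa [SimpleGraph.Walk.length_cons] using this

lemma geo_getVert (hc : G.Connected) {u v : Fin n} (p : G.Walk u v)
    (hp : p.length = G.dist u v) (i : ℕ) (hi : i ≤ p.length) :
    G.dist u (p.getVert i) = i ∧ G.dist (p.getVert i) v = p.length - i := by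
  have h1 := dist_getVert_le hc p i
  have h2 := getVert_dist_le p i
  have h3 : G.dist u v ≤ G.dist u (p.getVert i) + G.dist (p.getVert i) v := hc.dist_triangle
  omega

lemma geo_support (hc : G.Connected) {u v w : Fin n} (p : G.Walk u v)
    (hp : p.length = G.dist u v) (hw : w ∈ p.support) :
    G.dist u w + G.dist w v = G.dist u v ∧ p.getVert (G.dist u w) = w := by
  obtain ⟨i, hiw, hil⟩ := SimpleGraph.Walk.mem_support_iff_exists_getVert.mp hw
  obtain ⟨ha, hb⟩ := geo_getVert hc p hp i hil
  subst hiw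
  constructor
  · omega
  · rw [ha]

lemma isPath_of_eq_dist (hconn : G.Connected) :
    ∀ {u v : Fin n} (p : G.Walk u v), p.length = G.dist u v → p.IsPath := by
  intro u v p
  induction p with
  | nil => intro _; exact SimpleGraph.Walk.IsPath.nil
  | @cons u v' w h q ih =>
      intro hp
      have hc : G.Reachable u w := SimpleGraph.Walk.reachable (SimpleGraph.Walk.cons h q)
      have hql : q.length = G.dist v' w := by
        have h1 : G.dist v' w ≤ q.length := G.dist_le q
        have h2 : G.dist u w ≤ 1 + G.dist v' w := by
          obtain ⟨q', hq'⟩ := (SimpleGraph.Walk.reachable q).exists_walk_length_eq_dist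
          have := G.dist_le (SimpleGraph.Walk.cons h q')
          simp only [SimpleGraph.Walk.length_cons] at this
          omega
        simp only [SimpleGraph.Walk.length_cons] at hp
        omega
      have hq : q.IsPath := ih hql
      refine hq.cons ?_
      intro hu
      -- u on geodesic q
      have := (geo_support hconn q hql hu).1
      have h1 : G.dist u w ≤ G.dist v' w := by omega
      simp only [SimpleGraph.Walk.length_cons] at hp
      omega

open SimpleGraph

variable {n : ℕ} {G : SimpleGraph (Fin n)} {r : Fin n}

noncomputable def chd (G : SimpleGraph (Fin n)) (r u : Fin n) : Finset (Fin n) :=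
  univ.filter (fun v => G.Adj u v ∧ G.dist r v = G.dist r u + 1)

noncomputable def Bu (G : SimpleGraph (Fin n)) (r u : Fin n) : Finset (Fin n) :=
  insert u (chd G r u)

lemma mem_chd {u v : Fin n} : v ∈ chd G r u ↔ G.Adj u v ∧ G.dist r v = G.dist r u + 1 := by
  simp [chd]

lemma mem_sub {u v : Fin n} :
    v ∈ subtreeFinset G r u ↔ G.dist r v = G.dist r u + G.dist u v := by
  simp [subtreeFinset]

noncomputable def gwalk (hT : G.IsTree) (u v : Fin n) : G.Walk u v :=
  (hT.isConnected.exists_walk_length_eq_dist u v).choose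

lemma gwalk_length (hT : G.IsTree) (u v : Fin n) : (gwalk hT u v).length = G.dist u v :=
  (hT.isConnected.exists_walk_length_eq_dist u v).choose_spec

lemma gwalk_isPath (hT : G.IsTree) (u v : Fin n) : (gwalk hT u v).IsPath :=
  isPath_of_eq_dist hT.isConnected _ (gwalk_length hT u v)

lemma path_eq (hT : G.IsTree) {u v : Fin n} (p q : G.Walk u v) (hp : p.IsPath) (hq : q.IsPath) : p = q :=
  congrArg Subtype.val (hT.IsAcyclic.path_unique ⟨p, hp⟩ ⟨q, hq⟩)

lemma mem_gwalk_of_dist (hT : G.IsTree) {c x : Fin n} (hd : G.dist r c + G.dist c x = G.dist r x) :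
    c ∈ (gwalk hT r x).support := by
  have hc := hT.isConnected
  set W := (gwalk hT r c).append (gwalk hT c x) with hW
  have hlen : W.length = G.dist r x := by
    rw [hW, SimpleGraph.Walk.length_append, gwalk_length, gwalk_length, hd]
  have hpath : W.IsPath := isPath_of_eq_dist hc W hlen
  have : W = gwalk hT r x := path_eq hT _ _ hpath (gwalk_isPath hT r x)
  rw [← this, hW, SimpleGraph.Walk.mem_support_append_iff]
  exact Or.inl (SimpleGraph.Walk.end_mem_support _)

lemma anc_eq (hT : G.IsTree) {a b x : Fin n} (h1 : G.dist r a + G.dist a x = G.dist r x)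
    (h2 : G.dist r b + G.dist b x = G.dist r x) (hab : G.dist r a = G.dist r b) : a = b := by
  have hc := hT.isConnected
  have ha := (geo_support hc _ (gwalk_length hT r x) (mem_gwalk_of_dist hT h1)).2
  have hb := (geo_support hc _ (gwalk_length hT r x) (mem_gwalk_of_dist hT h2)).2
  rw [← ha, ← hb, hab]

noncomputable def par (hT : G.IsTree) (x : Fin n) : Fin n := (gwalk hT r x).getVert (G.dist r x - 1)

lemma dist_pos (hT : G.IsTree) {x : Fin n} (hx : x ≠ r) : 0 < G.dist r x :=
  hT.isConnected.pos_dist_of_ne (Ne.symm hx)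

lemma par_adj (hT : G.IsTree) {x : Fin n} (hx : x ≠ r) : G.Adj (par hT (r := r) x) x := by
  have hd := dist_pos hT hx
  have hl := gwalk_length hT r x
  have h := (gwalk hT r x).adj_getVert_succ (i := G.dist r x - 1) (by omega)
  have h2 : G.dist r x - 1 + 1 = (gwalk hT r x).length := by omega
  rw [h2, SimpleGraph.Walk.getVert_length] at h
  exact h

lemma dist_par (hT : G.IsTree) {x : Fin n} (hx : x ≠ r) :
    G.dist r (par hT (r := r) x) = G.dist r x - 1 := by
  have hd := dist_pos hT hx
  have hl := gwalk_length hT r x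
  have := (geo_getVert hT.isConnected _ hl (G.dist r x - 1) (by omega)).1
  exact this

lemma adj_dist_one (hT : G.IsTree) {p x : Fin n} (h : G.Adj p x) : G.dist p x = 1 := by
  have h1 : G.dist p x ≤ 1 := by
    simpa using G.dist_le (SimpleGraph.Walk.cons h SimpleGraph.Walk.nil)
  have h2 : G.dist p x ≠ 0 := by
    intro h0
    exact h.ne (hT.isConnected.dist_eq_zero_iff.mp h0)
  omega

lemma par_unique (hT : G.IsTree) {p x : Fin n} (hp : G.Adj p x) (hd : G.dist r x = G.dist r p + 1) :
    p = par hT (r := r) x := by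
  have hx : x ≠ r := by
    intro h
    rw [h, SimpleGraph.dist_self] at hd
    omega
  have h1 : G.dist r p + G.dist p x = G.dist r x := by rw [adj_dist_one hT hp]; omega
  have h2 : G.dist r (par hT (r := r) x) + G.dist (par hT (r := r) x) x = G.dist r x := by
    rw [adj_dist_one hT (par_adj hT hx), dist_par hT hx]
    have := dist_pos hT hx; omega
  exact anc_eq hT h1 h2 (by rw [dist_par hT hx]; omega)

lemma mem_chd_par (hT : G.IsTree) {x : Fin n} (hx : x ≠ r) : x ∈ chd G r (par hT (r := r) x) := by
  rw [mem_chd]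
  refine ⟨par_adj hT hx, ?_⟩
  rw [dist_par hT hx]
  have := dist_pos hT hx; omega

lemma adj_dist_ne (hT : G.IsTree) {a b : Fin n} (h : G.Adj a b) : G.dist r a ≠ G.dist r b := by
  intro heq
  by_cases h0 : G.dist r a = 0
  · have ha : r = a := hT.isConnected.dist_eq_zero_iff.mp h0
    have hb : r = b := hT.isConnected.dist_eq_zero_iff.mp (heq ▸ h0)
    exact h.ne (ha ▸ hb ▸ rfl)
  · set W := (gwalk hT r b).concat h.symm with hW
    have hbnotin : a ∉ (gwalk hT r b).support := by
      intro hmem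
      have := (geo_support hT.isConnected _ (gwalk_length hT r b) hmem).1
      have : G.dist a b = 0 := by omega
      exact h.ne (hT.isConnected.dist_eq_zero_iff.mp this)
    have hpath : W.IsPath := by
      rw [← SimpleGraph.Walk.isPath_reverse_iff, hW, SimpleGraph.Walk.reverse_concat]
      refine ((gwalk_isPath hT r b).reverse).cons ?_
      rw [SimpleGraph.Walk.support_reverse]
      simpa using hbnotin
    have heqw : W = gwalk hT r a := path_eq hT _ _ hpath (gwalk_isPath hT r a)
    have hlen : W.length = G.dist r b + 1 := by
      rw [hW, SimpleGraph.Walk.length_concat, gwalk_length]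
    rw [heqw, gwalk_length] at hlen
    omega

lemma adj_cases (hT : G.IsTree) {a b : Fin n} (h : G.Adj a b) : a ∈ chd G r b ∨ b ∈ chd G r a := by
  have hne := adj_dist_ne (r := r) hT h
  have t1 : G.dist r a ≤ G.dist r b + 1 := by
    have := hT.isConnected.dist_triangle (u := r) (v := b) (w := a)
    have := adj_dist_one hT h.symm
    omega
  have t2 : G.dist r b ≤ G.dist r a + 1 := by
    have := hT.isConnected.dist_triangle (u := r) (v := a) (w := b)
    have := adj_dist_one hT h
    omega
  rcases Nat.lt_or_ge (G.dist r a) (G.dist r b) with hlt | hge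
  · exact Or.inr (mem_chd.mpr ⟨h, by omega⟩)
  · exact Or.inl (mem_chd.mpr ⟨h.symm, by omega⟩)

lemma sub_self (u : Fin n) : u ∈ subtreeFinset G r u := by
  rw [mem_sub, SimpleGraph.dist_self]
  omega

lemma mem_sub_r (v : Fin n) : v ∈ subtreeFinset G r r := by
  rw [mem_sub, SimpleGraph.dist_self]
  omega

lemma eq_r_of_r_mem (hT : G.IsTree) {u : Fin n} (h : r ∈ subtreeFinset G r u) : u = r := by
  rw [mem_sub, SimpleGraph.dist_self] at h
  have : G.dist r u = 0 := by omega
  exact (hT.isConnected.dist_eq_zero_iff.mp this).symm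

lemma dist_le_of_mem_sub {u x : Fin n} (h : x ∈ subtreeFinset G r u) :
    G.dist r u ≤ G.dist r x := by
  rw [mem_sub] at h; omega

lemma not_mem_sub_of_dist_lt {w c : Fin n} (h : G.dist r w < G.dist r c) :
    w ∉ subtreeFinset G r c := by
  intro hm; have := dist_le_of_mem_sub hm; omega

lemma mem_sub_of_child (hT : G.IsTree) {c y z : Fin n} (hy : y ∈ subtreeFinset G r c) (ha : G.Adj y z)
    (hd : G.dist r z = G.dist r y + 1) : z ∈ subtreeFinset G r c := by
  rw [mem_sub] at hy ⊢
  have t1 : G.dist r z ≤ G.dist r c + G.dist c z := hT.isConnected.dist_triangle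
  have t2 : G.dist c z ≤ G.dist c y + G.dist y z := hT.isConnected.dist_triangle
  have t3 := adj_dist_one hT ha
  have t4 : G.dist r c + G.dist c z ≤ G.dist r z := by omega
  omega

lemma chd_mem_sub (hT : G.IsTree) {u c : Fin n} (h : c ∈ chd G r u) : c ∈ subtreeFinset G r u := by
  rw [mem_chd] at h
  rw [mem_sub, adj_dist_one hT h.1, h.2]

lemma sub_subset_of_chd (hT : G.IsTree) {u c x : Fin n} (h : c ∈ chd G r u) (hx : x ∈ subtreeFinset G r c) :
    x ∈ subtreeFinset G r u := by
  rw [mem_chd] at h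
  rw [mem_sub] at hx ⊢
  have t0 := adj_dist_one hT h.1
  have t1 : G.dist u x ≤ G.dist u c + G.dist c x := hT.isConnected.dist_triangle
  have t2 : G.dist r x ≤ G.dist r u + G.dist u x := hT.isConnected.dist_triangle
  omega

lemma par_mem_sub (hT : G.IsTree) {w x : Fin n} (hx : x ∈ subtreeFinset G r w) (hxw : x ≠ w) :
    par hT (r := r) x ∈ subtreeFinset G r w ∧ G.dist w (par hT (r := r) x) = G.dist w x - 1 := by
  have hc := hT.isConnected
  rw [mem_sub] at hx
  have hm : 0 < G.dist w x := hc.pos_dist_of_ne (Ne.symm hxw)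
  set m := G.dist w x with hmdef
  set q := (gwalk hT w x).getVert (m - 1) with hq
  have hl := gwalk_length hT w x
  obtain ⟨hq1, hq2⟩ := geo_getVert hc _ hl (m - 1) (by omega)
  rw [← hq] at hq1 hq2
  have hq2' : G.dist q x = 1 := by rw [hq2]; omega
  have hadj : G.Adj q x := by
    have h := (gwalk hT w x).adj_getVert_succ (i := m - 1) (by omega)
    have h2 : m - 1 + 1 = (gwalk hT w x).length := by omega
    rw [h2, SimpleGraph.Walk.getVert_length] at h
    rw [hq]; exact h
  have hrq : G.dist r q = G.dist r x - 1 := by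
    have t1 : G.dist r q ≤ G.dist r w + G.dist w q := hc.dist_triangle
    have t2 : G.dist r x ≤ G.dist r q + G.dist q x := hc.dist_triangle
    omega
  have hqpar : q = par hT (r := r) x := par_unique hT hadj (by omega)
  constructor
  · rw [← hqpar, mem_sub]; omega
  · rw [← hqpar]; omega

lemma exists_chd (hT : G.IsTree) {w x : Fin n} (hx : x ∈ subtreeFinset G r w) (hxw : x ≠ w) :
    ∃ c ∈ chd G r w, x ∈ subtreeFinset G r c := by
  have hc := hT.isConnected
  obtain ⟨N, hN⟩ : ∃ N, G.dist w x ≤ N := ⟨G.dist w x, le_refl _⟩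
  induction N generalizing x with
  | zero =>
      exact absurd (hc.dist_eq_zero_iff.mp (by omega)) (Ne.symm hxw)
  | succ N ih =>
      have hm : 0 < G.dist w x := hc.pos_dist_of_ne (Ne.symm hxw)
      by_cases h1 : G.dist w x = 1
      · have hadj : G.Adj w x := SimpleGraph.dist_eq_one_iff_adj.mp h1
        refine ⟨x, mem_chd.mpr ⟨hadj, ?_⟩, sub_self x⟩
        rw [mem_sub] at hx; omega
      · obtain ⟨hp1, hp2⟩ := par_mem_sub hT hx hxw
        have hpw : par hT (r := r) x ≠ w := by
          intro h; rw [h] at hp2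
          rw [SimpleGraph.dist_self] at hp2; omega
        obtain ⟨c, hc1, hc2⟩ := ih hp1 hpw (by omega)
        have hxr : x ≠ r := by
          rw [mem_sub] at hx
          intro h; subst h
          rw [SimpleGraph.dist_self] at hx
          have := hc.pos_dist_of_ne (Ne.symm hxw)
          have := hc.pos_dist_of_ne (hxw)
          omega
        refine ⟨c, hc1, mem_sub_of_child hT hc2 (par_adj hT hxr) ?_⟩
        rw [dist_par hT hxr]
        have := dist_pos hT hxr
        omega

lemma chd_eq_of_mem (hT : G.IsTree) {w c c' : Fin n} (h : c ∈ chd G r w) (h' : c' ∈ chd G r w)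
    (hm : c ∈ subtreeFinset G r c') : c = c' := by
  rw [mem_chd] at h h'
  rw [mem_sub] at hm
  have : G.dist c' c = 0 := by omega
  exact (hT.isConnected.dist_eq_zero_iff.mp this).symm

lemma sub_disjoint (hT : G.IsTree) {w c c' x : Fin n} (h : c ∈ chd G r w) (h' : c' ∈ chd G r w) (hne : c ≠ c')
    (hx : x ∈ subtreeFinset G r c) (hx' : x ∈ subtreeFinset G r c') : False := by
  rw [mem_chd] at h h'
  rw [mem_sub] at hx hx'
  exact hne (anc_eq (r := r) hT (a := c) (b := c') (x := x) (by omega) (by omega) (by omega))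


lemma mem_Bu_self (u : Fin n) : u ∈ Bu G r u := Finset.mem_insert_self u _

lemma mem_Bu_of_chd {u c : Fin n} (h : c ∈ chd G r u) : c ∈ Bu G r u :=
  Finset.mem_insert_of_mem h

/-- Convexity of all subtrees with respect to an arrangement. -/
def Conv (G : SimpleGraph (Fin n)) (r : Fin n) (π : Equiv.Perm (Fin n)) : Prop :=
  ∀ c x z y : Fin n, x ∈ subtreeFinset G r c → z ∈ subtreeFinset G r c →
    π x < π y → π y < π z → y ∈ subtreeFinset G r c

lemma perm_lt_ne {π : Equiv.Perm (Fin n)} {a b : Fin n} (h : π a < π b) : a ≠ b := by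
  intro he; subst he; exact lt_irrefl _ h

lemma cross_core (hT : G.IsTree) (π : Equiv.Perm (Fin n)) (hconv : Conv G r π) {s t u v : Fin n}
    (hst : G.Adj s t) (huv : G.Adj u v) (h1 : π s < π u) (h2 : π u < π t) (h3 : π t < π v) :
    False := by
  have hus : u ≠ s := (perm_lt_ne h1).symm
  have hut : u ≠ t := perm_lt_ne h2
  have hvt : v ≠ t := (perm_lt_ne h3).symm
  have hvu : v ≠ u := (perm_lt_ne (lt_trans h2 h3)).symm
  have hvs : v ≠ s := (perm_lt_ne (lt_trans h1 (lt_trans h2 h3))).symm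
  obtain ⟨w1, c1, hc1, hor⟩ : ∃ w1 c1, c1 ∈ chd G r w1 ∧
      ((s = w1 ∧ t = c1) ∨ (s = c1 ∧ t = w1)) := by
    rcases adj_cases hT hst with h | h
    · exact ⟨t, s, h, Or.inr ⟨rfl, rfl⟩⟩
    · exact ⟨s, t, h, Or.inl ⟨rfl, rfl⟩⟩
  have hsw : s ∈ subtreeFinset G r w1 := by
    rcases hor with ⟨hs, ht⟩ | ⟨hs, ht⟩
    · rw [hs]; exact sub_self w1
    · rw [hs]; exact chd_mem_sub hT hc1
  have htw : t ∈ subtreeFinset G r w1 := by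
    rcases hor with ⟨hs, ht⟩ | ⟨hs, ht⟩
    · rw [ht]; exact chd_mem_sub hT hc1
    · rw [ht]; exact sub_self w1
  have huw1 : u ∈ subtreeFinset G r w1 := hconv w1 s t u hsw htw h1 h2
  have hu_ne_w1 : u ≠ w1 := by
    rcases hor with ⟨hs, ht⟩ | ⟨hs, ht⟩
    · rw [← hs]; exact hus
    · rw [← ht]; exact hut
  obtain ⟨c', hc', hu'⟩ := exists_chd hT huw1 hu_ne_w1
  have hdc' : G.dist r c' = G.dist r w1 + 1 := (mem_chd.mp hc').2
  by_cases hv : v ∈ subtreeFinset G r c'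
  · have ht' : t ∈ subtreeFinset G r c' := hconv c' u v t hu' hv h2 h3
    have htc1 : t = c1 := by
      rcases hor with ⟨hs, ht⟩ | ⟨hs, ht⟩
      · exact ht
      · exfalso
        refine not_mem_sub_of_dist_lt (r := r) (w := w1) (c := c') (by rw [hdc']; exact Nat.lt_succ_self _) ?_
        rw [← ht]; exact ht'
    have hcc : c1 = c' := chd_eq_of_mem hT hc1 hc' (htc1 ▸ ht')
    subst hcc
    rw [htc1] at h2 h3
    -- u, v ∈ sub c1, u ≠ c1, v ≠ c1
    have huc1 : u ≠ c1 := htc1 ▸ hut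
    have hvc1 : v ≠ c1 := htc1 ▸ hvt
    obtain ⟨y, x, hx, hor2⟩ : ∃ y x, x ∈ chd G r y ∧
        ((u = y ∧ v = x) ∨ (u = x ∧ v = y)) := by
      rcases adj_cases hT huv with h | h
      · exact ⟨v, u, h, Or.inr ⟨rfl, rfl⟩⟩
      · exact ⟨u, v, h, Or.inl ⟨rfl, rfl⟩⟩
    have hxc1 : x ∈ subtreeFinset G r c1 := by
      rcases hor2 with ⟨h4, h5⟩ | ⟨h4, h5⟩
      · rw [← h5]; exact hv
      · rw [← h4]; exact hu'
    have hyc1 : y ∈ subtreeFinset G r c1 := by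
      rcases hor2 with ⟨h4, h5⟩ | ⟨h4, h5⟩
      · rw [← h4]; exact hu'
      · rw [← h5]; exact hv
    have hxnec1 : x ≠ c1 := by
      rcases hor2 with ⟨h4, h5⟩ | ⟨h4, h5⟩
      · rw [← h5]; exact hvc1
      · rw [← h4]; exact huc1
    have hynec1 : y ≠ c1 := by
      rcases hor2 with ⟨h4, h5⟩ | ⟨h4, h5⟩
      · rw [← h4]; exact huc1
      · rw [← h5]; exact hvc1
    have hyx : y = par hT (r := r) x := par_unique hT (mem_chd.mp hx).1 (mem_chd.mp hx).2
    obtain ⟨c'', hc'', hx''⟩ := exists_chd hT hxc1 hxnec1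
    have hxne'' : x ≠ c'' := by
      intro he; subst he
      exact hynec1 (by
        rw [hyx]
        exact (par_unique hT (mem_chd.mp hc'').1 (mem_chd.mp hc'').2).symm)
    have hy'' : y ∈ subtreeFinset G r c'' := by
      rw [hyx]; exact (par_mem_sub hT hx'' hxne'').1
    have huin : u ∈ subtreeFinset G r c'' := by
      rcases hor2 with ⟨h4, h5⟩ | ⟨h4, h5⟩
      · rw [h4]; exact hy''
      · rw [h4]; exact hx''
    have hvin : v ∈ subtreeFinset G r c'' := by
      rcases hor2 with ⟨h4, h5⟩ | ⟨h4, h5⟩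
      · rw [h5]; exact hx''
      · rw [h5]; exact hy''
    have hc1in : c1 ∈ subtreeFinset G r c'' := hconv c'' u v c1 huin hvin h2 h3
    have : G.dist r c1 < G.dist r c'' := by
      have := (mem_chd.mp hc'').2; omega
    exact not_mem_sub_of_dist_lt this hc1in
  · rcases adj_cases hT huv with h | h
    · -- u ∈ chd G r v : v is the parent of u
      have hvpar : v = par hT (r := r) u := par_unique hT (mem_chd.mp h).1 (mem_chd.mp h).2
      by_cases huc : u = c'
      · subst huc
        have hw1par : w1 = par hT (r := r) u :=
          par_unique hT (mem_chd.mp hc').1 (mem_chd.mp hc').2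
        have : v = w1 := by rw [hvpar, hw1par]
        rcases hor with ⟨hs, ht⟩ | ⟨hs, ht⟩
        · exact hvs (by rw [this, hs])
        · exact hvt (by rw [this, ht])
      · have := (par_mem_sub hT hu' huc).1
        rw [← hvpar] at this
        exact hv this
    · exact hv (mem_sub_of_child hT hu' (mem_chd.mp h).1 (mem_chd.mp h).2)

lemma cover_core (hT : G.IsTree) (π : Equiv.Perm (Fin n)) (hconv : Conv G r π) {s t : Fin n}
    (hst : G.Adj s t) (h1 : π s < π r) (h2 : π r < π t) : False := by
  obtain ⟨w1, c1, hc1, hor⟩ : ∃ w1 c1, c1 ∈ chd G r w1 ∧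
      ((s = w1 ∧ t = c1) ∨ (s = c1 ∧ t = w1)) := by
    rcases adj_cases hT hst with h | h
    · exact ⟨t, s, h, Or.inr ⟨rfl, rfl⟩⟩
    · exact ⟨s, t, h, Or.inl ⟨rfl, rfl⟩⟩
  have hsw : s ∈ subtreeFinset G r w1 := by
    rcases hor with ⟨hs, ht⟩ | ⟨hs, ht⟩
    · rw [hs]; exact sub_self w1
    · rw [hs]; exact chd_mem_sub hT hc1
  have htw : t ∈ subtreeFinset G r w1 := by
    rcases hor with ⟨hs, ht⟩ | ⟨hs, ht⟩
    · rw [ht]; exact chd_mem_sub hT hc1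
    · rw [ht]; exact sub_self w1
  have hr : r ∈ subtreeFinset G r w1 := hconv w1 s t r hsw htw h1 h2
  have hw1r : w1 = r := eq_r_of_r_mem hT hr
  have hrs : s ≠ r := perm_lt_ne h1
  have hrt : t ≠ r := (perm_lt_ne h2).symm
  rcases hor with ⟨hs, ht⟩ | ⟨hs, ht⟩
  · exact hrs (by rw [hs, hw1r])
  · exact hrt (by rw [ht, hw1r])

lemma proj_of_conv (hT : G.IsTree) (π : Equiv.Perm (Fin n)) (hconv : Conv G r π) :
    IsProjectiveArr G r π := by
  constructor
  · intro s t u v hst huv h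
    exact absurd (cross_core hT π hconv hst huv h.1 h.2.1 h.2.2) not_false
  · intro s t hst h
    exact absurd (cover_core hT π hconv hst h.1 h.2) not_false

lemma side_of_conv {π : Equiv.Perm (Fin n)} (hconv : Conv G r π) {c w : Fin n}
    (hw : w ∉ subtreeFinset G r c) :
    (∀ x ∈ subtreeFinset G r c, π w < π x) ∨ (∀ x ∈ subtreeFinset G r c, π x < π w) := by
  by_contra hcon
  push_neg at hcon
  obtain ⟨⟨x, hx, hx2⟩, ⟨z, hz, hz2⟩⟩ := hcon
  have hxw : x ≠ w := fun h => hw (h ▸ hx)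
  have hzw : z ≠ w := fun h => hw (h ▸ hz)
  refine hw (hconv c x z w hx hz ?_ ?_)
  · exact lt_of_le_of_ne hx2 (fun h => hxw (π.injective h))
  · exact lt_of_le_of_ne hz2 (fun h => hzw (π.injective h.symm))

lemma blocks_side {π : Equiv.Perm (Fin n)} (hconv : Conv G r π) {c c' : Fin n}
    (hdisj : ∀ x, x ∈ subtreeFinset G r c → x ∈ subtreeFinset G r c' → False) :
    (∀ x ∈ subtreeFinset G r c, ∀ y ∈ subtreeFinset G r c', π x < π y) ∨
    (∀ x ∈ subtreeFinset G r c, ∀ y ∈ subtreeFinset G r c', π y < π x) := by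
  by_contra hcon
  push_neg at hcon
  obtain ⟨⟨x, hx, y, hy, hxy⟩, ⟨x', hx', y', hy', hxy'⟩⟩ := hcon
  have h1 : π y < π x := lt_of_le_of_ne hxy (fun h => hdisj x hx (π.injective h.symm ▸ hy))
  have h2 : π x' < π y' := lt_of_le_of_ne hxy' (fun h => hdisj x' hx' (π.injective h ▸ hy'))
  have hx'n : x' ∉ subtreeFinset G r c' := fun h => hdisj x' hx' h
  rcases side_of_conv hconv hx'n with hs | hs
  · have : y ∈ subtreeFinset G r c := hconv c x' x y hx' hx (hs y hy) h1
    exact hdisj y this hy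
  · exact absurd h2 (not_lt.mpr (le_of_lt (hs y' hy')))

lemma compare_core (hT : G.IsTree) {π π' : Equiv.Perm (Fin n)} (hc : Conv G r π)
    (hc' : Conv G r π')
    (hloc : ∀ u a b : Fin n, a ∈ Bu G r u → b ∈ Bu G r u → (π a < π b ↔ π' a < π' b)) :
    ∀ a b : Fin n, π a < π b → π' a < π' b := by
  intro a b hab
  have hne : a ≠ b := perm_lt_ne hab
  by_cases h1 : b ∈ subtreeFinset G r a
  · obtain ⟨c, hcc, hbc⟩ := exists_chd hT h1 (Ne.symm hne)
    have hna : a ∉ subtreeFinset G r c :=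
      not_mem_sub_of_dist_lt (by rw [(mem_chd.mp hcc).2]; exact Nat.lt_succ_self _)
    have hccs : c ∈ subtreeFinset G r c := sub_self c
    rcases side_of_conv hc hna with hs | hs
    · have hac : π a < π c := hs c hccs
      have h' : π' a < π' c := (hloc a a c (mem_Bu_self a) (mem_Bu_of_chd hcc)).mp hac
      rcases side_of_conv hc' hna with hs' | hs'
      · exact hs' b hbc
      · exact absurd h' (not_lt.mpr (le_of_lt (hs' c hccs)))
    · exact absurd hab (not_lt.mpr (le_of_lt (hs b hbc)))
  · by_cases h2 : a ∈ subtreeFinset G r b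
    · obtain ⟨c, hcc, hac⟩ := exists_chd hT h2 hne
      have hnb : b ∉ subtreeFinset G r c :=
        not_mem_sub_of_dist_lt (by rw [(mem_chd.mp hcc).2]; exact Nat.lt_succ_self _)
      have hccs : c ∈ subtreeFinset G r c := sub_self c
      rcases side_of_conv hc hnb with hs | hs
      · exact absurd hab (not_lt.mpr (le_of_lt (hs a hac)))
      · have hcb : π c < π b := hs c hccs
        have h' : π' c < π' b := (hloc b c b (mem_Bu_of_chd hcc) (mem_Bu_self b)).mp hcb
        rcases side_of_conv hc' hnb with hs' | hs'
        · exact absurd h' (not_lt.mpr (le_of_lt (hs' c hccs)))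
        · exact hs' a hac
    · set D := univ.filter (fun w => a ∈ subtreeFinset G r w ∧ b ∈ subtreeFinset G r w) with hD
      have hDne : D.Nonempty := ⟨r, by
        rw [hD, Finset.mem_filter]
        exact ⟨Finset.mem_univ r, mem_sub_r a, mem_sub_r b⟩⟩
      obtain ⟨w, hwD, hwmax⟩ := Finset.exists_max_image D (fun w => G.dist r w) hDne
      rw [hD, Finset.mem_filter] at hwD
      obtain ⟨-, haw, hbw⟩ := hwD
      have hwa : a ≠ w := fun h => h1 (h ▸ hbw)
      have hwb : b ≠ w := fun h => h2 (h ▸ haw)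
      obtain ⟨ca, hca, haca⟩ := exists_chd hT haw hwa
      obtain ⟨cb, hcb, hbcb⟩ := exists_chd hT hbw hwb
      have hcane : ca ≠ cb := by
        intro h
        subst h
        have hmem : ca ∈ D := by
          rw [hD, Finset.mem_filter]
          exact ⟨Finset.mem_univ ca, haca, hbcb⟩
        have := hwmax ca hmem
        have := (mem_chd.mp hca).2
        omega
      have hdisj : ∀ x, x ∈ subtreeFinset G r ca → x ∈ subtreeFinset G r cb → False :=
        fun x hx hx' => sub_disjoint hT hca hcb hcane hx hx'
      rcases blocks_side hc hdisj with hs | hs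
      · have hcab : π ca < π cb := hs ca (sub_self ca) cb (sub_self cb)
        have h' : π' ca < π' cb :=
          (hloc w ca cb (mem_Bu_of_chd hca) (mem_Bu_of_chd hcb)).mp hcab
        rcases blocks_side hc' hdisj with hs' | hs'
        · exact hs' a haca b hbcb
        · exact absurd h' (not_lt.mpr (le_of_lt (hs' ca (sub_self ca) cb (sub_self cb))))
      · exact absurd hab (not_lt.mpr (le_of_lt (hs a haca b hbcb)))

lemma sub_support (hT : G.IsTree) {c x q : Fin n} (hx : x ∈ subtreeFinset G r c)
    (hq : q ∈ (gwalk hT c x).support) : q ∈ subtreeFinset G r c := by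
  have hc := hT.isConnected
  have h := (geo_support hc _ (gwalk_length hT c x) hq).1
  rw [mem_sub] at hx ⊢
  have t1 : G.dist r q ≤ G.dist r c + G.dist c q := hc.dist_triangle
  have t2 : G.dist r x ≤ G.dist r q + G.dist q x := hc.dist_triangle
  omega

lemma out_support (hT : G.IsTree) {c y q : Fin n} (hy : y ∉ subtreeFinset G r c)
    (hq : q ∈ (gwalk hT y r).support) : q ∉ subtreeFinset G r c := by
  have hc := hT.isConnected
  intro hqc
  have h := (geo_support hc _ (gwalk_length hT y r) hq).1
  rw [mem_sub] at hqc
  apply hy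
  rw [mem_sub]
  have e1 : G.dist q r = G.dist r q := SimpleGraph.dist_comm
  have e2 : G.dist y r = G.dist r y := SimpleGraph.dist_comm
  have e3 : G.dist q y = G.dist y q := SimpleGraph.dist_comm
  have t1 : G.dist r y ≤ G.dist r c + G.dist c y := hc.dist_triangle
  have t2 : G.dist c y ≤ G.dist c q + G.dist q y := hc.dist_triangle
  omega

lemma conv_of_proj (hT : G.IsTree) {π : Equiv.Perm (Fin n)} (hπ : IsProjectiveArr G r π) :
    Conv G r π := by
  intro c x z y hx hz h1 h2
  by_cases hcr : c = r
  · subst hcr; exact mem_sub_r y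
  by_contra hy
  have hrc : r ∉ subtreeFinset G r c := fun h => hcr (eq_r_of_r_mem hT h)
  set W1 := ((gwalk hT c x).reverse.append (gwalk hT c z)) with hW1
  have hsupp1 : ∀ q ∈ W1.support, q ∈ subtreeFinset G r c := by
    intro q hq
    rw [hW1, SimpleGraph.Walk.mem_support_append_iff] at hq
    rcases hq with hq | hq
    · rw [SimpleGraph.Walk.support_reverse, List.mem_reverse] at hq
      exact sub_support hT hx hq
    · exact sub_support hT hz hq
  obtain ⟨s, t, hst, hsW, htW, hPs, hPt⟩ :=
    walk_cross (fun q => π q < π y) W1 h1 (not_lt.mpr (le_of_lt h2))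
  have hsc := hsupp1 s hsW
  have htc := hsupp1 t htW
  have hty : t ≠ y := fun h => hy (h ▸ htc)
  have h2t : π y < π t :=
    lt_of_le_of_ne (not_lt.mp hPt) (fun h => hty (π.injective h.symm))
  by_cases hr1 : π s < π r ∧ π r < π t
  · exact hπ.2 s t hst hr1
  · have hrs : r ≠ s := fun h => hrc (h ▸ hsc)
    have hrt : r ≠ t := fun h => hrc (h ▸ htc)
    have hr2 : π r < π s ∨ π t < π r := by
      rcases not_and_or.mp hr1 with h | h
      · left
        exact lt_of_le_of_ne (not_lt.mp h) (fun hh => hrs (π.injective hh))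
      · right
        exact lt_of_le_of_ne (not_lt.mp h) (fun hh => hrt (π.injective hh).symm)
    have hyr : y ≠ r := by
      intro h
      subst h
      exact hr1 ⟨hPs, h2t⟩
    obtain ⟨a, b2, hab, haW, hbW, hPa, hPb⟩ :=
      walk_cross (fun q => π s < π q ∧ π q < π t) (gwalk hT y r) ⟨hPs, h2t⟩
        (by
          intro hcon
          rcases hr2 with h | h
          · exact absurd (lt_trans h hcon.1) (lt_irrefl _)
          · exact absurd (lt_trans h hcon.2) (lt_irrefl _))
    have hac := out_support hT hy haW
    have hbc := out_support hT hy hbW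
    have hbs : b2 ≠ s := fun h => hbc (h ▸ hsc)
    have hbt : b2 ≠ t := fun h => hbc (h ▸ htc)
    obtain ⟨ha1, ha2⟩ := hPa
    have hb2 : π b2 < π s ∨ π t < π b2 := by
      rcases not_and_or.mp hPb with h | h
      · left
        exact lt_of_le_of_ne (not_lt.mp h) (fun hh => hbs (π.injective hh))
      · right
        exact lt_of_le_of_ne (not_lt.mp h) (fun hh => hbt (π.injective hh).symm)
    rcases hb2 with hb2 | hb2
    · exact hπ.1 b2 a s t hab.symm hst ⟨hb2, ha1, ha2⟩
    · exact hπ.1 s t a b2 hst hab ⟨ha1, ha2, hb2⟩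

/-! ### Lexicographic machinery -/

abbrev LL : List ℕ → List ℕ → Prop := List.Lex (· < ·)

lemma LL_trans {A B C : List ℕ} (h1 : LL A B) (h2 : LL B C) : LL A C :=
  List.lex_trans (fun h1 h2 => lt_trans h1 h2) h1 h2

lemma LL_irrefl (A : List ℕ) : ¬ LL A A := irrefl_of LL A

lemma LL_trichotomous (A B : List ℕ) : LL A B ∨ A = B ∨ LL B A := trichotomous_of LL A B

lemma LL_append_iff (P : List ℕ) {A B : List ℕ} : LL (P ++ A) (P ++ B) ↔ LL A B := by
  induction P with
  | nil => simp
  | cons p P ih => simpa [List.cons_append, List.cons_lex_cons_iff] using ih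

lemma LL_singleton_ne {A B : List ℕ} {a b : ℕ} (P : List ℕ) (h : a ≠ b) :
    LL (P ++ a :: A) (P ++ b :: B) ↔ a < b := by
  rw [LL_append_iff]
  constructor
  · intro hl
    cases hl with
    | cons h' => exact absurd rfl h
    | rel h' => exact h'
  · exact fun hl => List.Lex.rel hl

lemma LL_prefix {A : List ℕ} (P : List ℕ) (h : A ≠ []) : LL P (P ++ A) := by
  induction P with
  | nil =>
      cases A with
      | nil => exact absurd rfl h
      | cons a l => exact List.Lex.nil
  | cons p P ih => exact List.Lex.cons ih

lemma LL_conv : ∀ (P A B C : List ℕ), P <+: A → P <+: C → LL A B → LL B C → P <+: B := by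
  intro P
  induction P with
  | nil => intro A B C _ _ _ _; exact List.nil_prefix
  | cons p P ih =>
    intro A B C hA hC hAB hBC
    match A, hA with
    | a :: A', hA =>
      obtain ⟨hpa, hA'⟩ := List.cons_prefix_cons.mp hA
      match C, hC with
      | c :: C', hC =>
        obtain ⟨hpc, hC'⟩ := List.cons_prefix_cons.mp hC
        match B, hAB with
        | b :: B', hAB =>
          subst hpa
          subst hpc
          rw [List.cons_prefix_cons]
          cases hAB with
          | cons h1 =>
              cases hBC with
              | cons h2 => exact ⟨rfl, ih A' B' C' hA' hC' h1 h2⟩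
              | rel h2 => exact absurd h2 (lt_irrefl _)
          | rel h1 =>
              cases hBC with
              | cons h2 => exact absurd h1 (lt_irrefl _)
              | rel h2 => exact absurd (lt_trans h1 h2) (lt_irrefl _)

lemma prefix_concat_of_le {P A : List ℕ} {t : ℕ} (h : P <+: A ++ [t])
    (hl : P.length ≤ A.length) : P <+: A := by
  have h1 : P = (A ++ [t]).take P.length := List.prefix_iff_eq_take.mp h
  rw [List.take_append_of_le_length hl] at h1
  rw [h1]
  exact List.take_prefix _ _

/-! ### The construction of an arrangement from local orders -/

noncomputable def rankf (σ : ∀ u : Fin n, {x // x ∈ Bu G r u} ≃ Fin ((Bu G r u).card))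
    (u a : Fin n) : ℕ :=
  if h : a ∈ Bu G r u then (σ u ⟨a, h⟩ : ℕ) else 0

lemma rankf_lt_iff {σ : ∀ u : Fin n, {x // x ∈ Bu G r u} ≃ Fin ((Bu G r u).card)}
    {u a b : Fin n} (ha : a ∈ Bu G r u) (hb : b ∈ Bu G r u) :
    rankf σ u a < rankf σ u b ↔ σ u ⟨a, ha⟩ < σ u ⟨b, hb⟩ := by
  rw [rankf, rankf, dif_pos ha, dif_pos hb, Fin.lt_def]

lemma rankf_ne {σ : ∀ u : Fin n, {x // x ∈ Bu G r u} ≃ Fin ((Bu G r u).card)}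
    {u a b : Fin n} (ha : a ∈ Bu G r u) (hb : b ∈ Bu G r u) (hne : a ≠ b) :
    rankf σ u a ≠ rankf σ u b := by
  rw [rankf, rankf, dif_pos ha, dif_pos hb]
  intro h
  have := (σ u).injective (Fin.val_injective h)
  exact hne (congrArg Subtype.val this)

variable (σT : ∀ u : Fin n, {x // x ∈ Bu G r u} ≃ Fin ((Bu G r u).card))

noncomputable def entAux (hT : G.IsTree) (σ : ∀ u : Fin n, {x // x ∈ Bu G r u} ≃ Fin ((Bu G r u).card)) :
    ℕ → Fin n → List ℕ
  | 0, _ => []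
  | (d+1), x => entAux hT σ d (par hT (r := r) x) ++ [rankf σ (par hT (r := r) x) x]

noncomputable def ent (hT : G.IsTree)
    (σ : ∀ u : Fin n, {x // x ∈ Bu G r u} ≃ Fin ((Bu G r u).card)) (x : Fin n) : List ℕ :=
  entAux hT σ (G.dist r x) x

lemma ent_r (hT : G.IsTree) : ent hT σT r = [] := by
  rw [ent, SimpleGraph.dist_self]
  rfl

lemma ent_ne (hT : G.IsTree) {x : Fin n} (hx : x ≠ r) :
    ent hT σT x = ent hT σT (par hT (r := r) x) ++ [rankf σT (par hT (r := r) x) x] := by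
  have hd := dist_pos hT hx
  have hp := dist_par hT hx
  rw [ent, ent]
  obtain ⟨k, hk⟩ : ∃ k, G.dist r x = k + 1 := ⟨G.dist r x - 1, by omega⟩
  rw [hk]
  have h2 : G.dist r (par hT (r := r) x) = k := by omega
  rw [h2]
  rfl

lemma len_ent (hT : G.IsTree) (x : Fin n) : (ent hT σT x).length = G.dist r x := by
  obtain ⟨N, hN⟩ : ∃ N, G.dist r x ≤ N := ⟨_, le_refl _⟩
  induction N generalizing x with
  | zero =>
      have : r = x := hT.isConnected.dist_eq_zero_iff.mp (by omega)
      subst this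
      rw [ent_r, SimpleGraph.dist_self]
      rfl
  | succ N ih =>
      by_cases hx : x = r
      · subst hx
        rw [ent_r, SimpleGraph.dist_self]
        rfl
      · have hd := dist_pos hT hx
        have hp := dist_par hT hx
        rw [ent_ne σT hT hx, List.length_append, ih _ (by omega)]
        simp
        omega

lemma ent_inj (hT : G.IsTree) : ∀ x y : Fin n, ent hT σT x = ent hT σT y → x = y := by
  have key : ∀ N : ℕ, ∀ x y : Fin n, G.dist r x ≤ N → ent hT σT x = ent hT σT y → x = y := by
    intro N
    induction N with
    | zero =>
        intro x y hx h
        have hxr : r = x := hT.isConnected.dist_eq_zero_iff.mp (by omega)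
        subst hxr
        have : (ent hT σT y).length = 0 := by rw [← h, ent_r]; rfl
        rw [len_ent] at this
        exact (hT.isConnected.dist_eq_zero_iff.mp this)
    | succ N ih =>
        intro x y hx h
        by_cases hxr : x = r
        · subst hxr
          have : (ent hT σT y).length = 0 := by rw [← h, ent_r]; rfl
          rw [len_ent] at this
          exact (hT.isConnected.dist_eq_zero_iff.mp this)
        · have hyr : y ≠ r := by
            intro hy
            subst hy
            have : (ent hT σT x).length = 0 := by rw [h, ent_r]; rfl
            rw [len_ent] at this
            exact hxr (hT.isConnected.dist_eq_zero_iff.mp this).symm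
          rw [ent_ne σT hT hxr, ent_ne σT hT hyr] at h
          obtain ⟨h1, h2⟩ := List.append_inj' h rfl
          have hd := dist_pos hT hxr
          have hp := dist_par hT hxr
          have hpp : par hT (r := r) x = par hT (r := r) y := ih _ _ (by omega) h1
          rw [← hpp] at h2
          have h3 : rankf σT (par hT (r := r) x) x = rankf σT (par hT (r := r) x) y := by
            simpa using h2
          by_contra hne
          exact rankf_ne (mem_Bu_of_chd (mem_chd_par hT hxr))
            (mem_Bu_of_chd (hpp ▸ mem_chd_par hT hyr)) hne h3
  intro x y h
  exact key (G.dist r x) x y (le_refl _) h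

lemma ent_chd (hT : G.IsTree) {u c : Fin n} (hc : c ∈ chd G r u) :
    ent hT σT c = ent hT σT u ++ [rankf σT u c] := by
  have hcr : c ≠ r := by
    intro h
    subst h
    have := (mem_chd.mp hc).2
    rw [SimpleGraph.dist_self] at this
    omega
  have hpu : u = par hT (r := r) c := par_unique hT (mem_chd.mp hc).1 (mem_chd.mp hc).2
  rw [ent_ne σT hT hcr, ← hpu]

lemma prefix_of_mem_sub (hT : G.IsTree) {c x : Fin n} (hx : x ∈ subtreeFinset G r c) :
    ent hT σT c <+: ent hT σT x := by
  obtain ⟨N, hN⟩ : ∃ N, G.dist c x ≤ N := ⟨_, le_refl _⟩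
  induction N generalizing x with
  | zero =>
      have : c = x := hT.isConnected.dist_eq_zero_iff.mp (by omega)
      subst this
      exact List.prefix_refl _
  | succ N ih =>
      by_cases hxc : x = c
      · subst hxc; exact List.prefix_refl _
      · have hxr : x ≠ r := by
          intro h
          rw [mem_sub, h, SimpleGraph.dist_self] at hx
          have h1 : G.dist r c = 0 := by omega
          exact hxc (h.trans (hT.isConnected.dist_eq_zero_iff.mp h1))
        obtain ⟨hpm, hpd⟩ := par_mem_sub hT hx hxc
        have hd : 0 < G.dist c x := hT.isConnected.pos_dist_of_ne (Ne.symm hxc)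
        have := ih hpm (by omega)
        rw [ent_ne σT hT hxr]
        exact this.trans (List.prefix_append _ _)

lemma mem_sub_of_prefix (hT : G.IsTree) {c x : Fin n}
    (h : ent hT σT c <+: ent hT σT x) : x ∈ subtreeFinset G r c := by
  obtain ⟨N, hN⟩ : ∃ N, G.dist r x ≤ N := ⟨_, le_refl _⟩
  induction N generalizing x with
  | zero =>
      have hxr : r = x := hT.isConnected.dist_eq_zero_iff.mp (by omega)
      subst hxr
      have h0 : ent hT σT c = [] := List.prefix_nil.mp (by rwa [ent_r σT hT] at h)
      have : G.dist r c = 0 := by rw [← len_ent σT hT, h0]; rfl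
      have : r = c := hT.isConnected.dist_eq_zero_iff.mp this
      subst this
      exact sub_self r
  | succ N ih =>
      by_cases hlen : (ent hT σT c).length = (ent hT σT x).length
      · have := h.eq_of_length hlen
        rw [ent_inj σT hT c x this]
        exact sub_self x
      · have hlt : (ent hT σT c).length < (ent hT σT x).length :=
          lt_of_le_of_ne h.length_le hlen
        rw [len_ent, len_ent] at hlt
        have hxr : x ≠ r := by
          intro hh
          subst hh
          rw [SimpleGraph.dist_self] at hlt
          omega
        have hd := dist_pos hT hxr
        have hp := dist_par hT hxr
        rw [ent_ne σT hT hxr] at h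
        have h2 : ent hT σT c <+: ent hT σT (par hT (r := r) x) := by
          apply prefix_concat_of_le h
          rw [len_ent, len_ent]
          omega
        have h3 := ih h2 (by omega)
        exact mem_sub_of_child hT h3 (par_adj hT hxr) (by omega)

noncomputable def sig (hT : G.IsTree)
    (σ : ∀ u : Fin n, {x // x ∈ Bu G r u} ≃ Fin ((Bu G r u).card)) (x : Fin n) : List ℕ :=
  ent hT σ x ++ [rankf σ x x]

lemma len_sig (hT : G.IsTree) (x : Fin n) : (sig hT σT x).length = G.dist r x + 1 := by
  rw [sig, List.length_append, len_ent]
  rfl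

lemma sig_inj (hT : G.IsTree) {x y : Fin n} (h : sig hT σT x = sig hT σT y) : x = y := by
  apply ent_inj σT hT
  rw [sig, sig] at h
  exact (List.append_inj' h rfl).1

lemma sig_conv (hT : G.IsTree) {c x z y : Fin n} (hx : x ∈ subtreeFinset G r c)
    (hz : z ∈ subtreeFinset G r c) (h1 : LL (sig hT σT x) (sig hT σT y))
    (h2 : LL (sig hT σT y) (sig hT σT z)) : y ∈ subtreeFinset G r c := by
  set P := ent hT σT c with hP
  have hPx : P <+: sig hT σT x := (prefix_of_mem_sub σT hT hx).trans (List.prefix_append _ _)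
  have hPz : P <+: sig hT σT z := (prefix_of_mem_sub σT hT hz).trans (List.prefix_append _ _)
  have hPy : P <+: sig hT σT y := LL_conv P _ _ _ hPx hPz h1 h2
  by_cases hc : P.length ≤ (ent hT σT y).length
  · have hPy' : P <+: ent hT σT y ++ [rankf σT y y] := hPy
    exact mem_sub_of_prefix σT hT (prefix_concat_of_le hPy' hc)
  · exfalso
    have h3 : P.length ≤ (sig hT σT y).length := hPy.length_le
    have h4 : (sig hT σT y).length = (ent hT σT y).length + 1 := by
      rw [sig, List.length_append]; rfl
    have hEq : P = sig hT σT y := hPy.eq_of_length (by omega)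
    obtain ⟨s, hs⟩ := hPx
    have hsne : s ≠ [] := by
      intro hh
      rw [hh, List.append_nil] at hs
      have l1 : (sig hT σT x).length = G.dist r x + 1 := len_sig σT hT x
      have l2 : P.length = G.dist r c := by rw [hP, len_ent]
      have l3 := dist_le_of_mem_sub hx
      rw [hs] at l2
      omega
    have h5 : LL (sig hT σT y) (sig hT σT x) := by
      rw [← hEq, ← hs]
      exact LL_prefix P hsne
    exact LL_irrefl _ (LL_trans h1 h5)

lemma sig_local (hT : G.IsTree) {u a b : Fin n} (ha : a ∈ Bu G r u) (hb : b ∈ Bu G r u)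
    (hne : a ≠ b) :
    LL (sig hT σT a) (sig hT σT b) ↔ rankf σT u a < rankf σT u b := by
  have hr := rankf_ne (σ := σT) ha hb hne
  rcases Finset.mem_insert.mp ha with ha' | ha' <;>
    rcases Finset.mem_insert.mp hb with hb' | hb'
  · exact absurd (ha'.trans hb'.symm) hne
  · subst ha'
    have hsb : sig hT σT b = ent hT σT a ++ (rankf σT a b :: [rankf σT b b]) := by
      rw [sig, ent_chd σT hT hb']
      simp
    have hsa : sig hT σT a = ent hT σT a ++ (rankf σT a a :: []) := by
      rw [sig]
    rw [hsa, hsb]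
    exact LL_singleton_ne _ hr
  · subst hb'
    have hsa : sig hT σT a = ent hT σT b ++ (rankf σT b a :: [rankf σT a a]) := by
      rw [sig, ent_chd σT hT ha']
      simp
    have hsb : sig hT σT b = ent hT σT b ++ (rankf σT b b :: []) := by
      rw [sig]
    rw [hsa, hsb]
    exact LL_singleton_ne _ hr
  · have hsa : sig hT σT a = ent hT σT u ++ (rankf σT u a :: [rankf σT a a]) := by
      rw [sig, ent_chd σT hT ha']
      simp
    have hsb : sig hT σT b = ent hT σT u ++ (rankf σT u b :: [rankf σT b b]) := by
      rw [sig, ent_chd σT hT hb']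
      simp
    rw [hsa, hsb]
    exact LL_singleton_ne _ hr

/-! ### Generic rank/order lemmas -/

lemma fin_le_apply {m : ℕ} (f : Fin m → Fin m) (hf : StrictMono f) :
    ∀ i : Fin m, (i : ℕ) ≤ (f i : ℕ) := by
  have key : ∀ k : ℕ, ∀ i : Fin m, (i : ℕ) = k → k ≤ (f i : ℕ) := by
    intro k
    induction k with
    | zero => intro i _; omega
    | succ k ih =>
        intro i hi
        have hk : k < m := by omega
        have hj : (⟨k, hk⟩ : Fin m) < i := by rw [Fin.lt_def]; simp; omega
        have h1 := ih ⟨k, hk⟩ rfl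
        have h2 := hf hj
        rw [Fin.lt_def] at h2
        omega
  intro i; exact key (i : ℕ) i rfl

lemma fin_equiv_strictMono_eq {m : ℕ} (e : Fin m ≃ Fin m) (he : StrictMono (fun i => e i)) :
    ∀ i, e i = i := by
  have hsymm : StrictMono (fun i => e.symm i) := by
    intro i j hij
    rcases lt_trichotomy (e.symm i) (e.symm j) with h | h | h
    · exact h
    · exfalso
      rw [← e.apply_symm_apply i, ← e.apply_symm_apply j, h] at hij
      exact lt_irrefl _ hij
    · exfalso
      have h2 := he h
      simp only [e.apply_symm_apply] at h2
      exact lt_irrefl _ (lt_trans hij h2)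
  intro i
  have h1 := fin_le_apply (fun i => e i) he i
  have h2 := fin_le_apply (fun i => e.symm i) hsymm (e i)
  simp only [e.symm_apply_apply] at h2
  exact Fin.ext (by omega)

lemma equiv_fin_unique {α : Type} [Fintype α] {m : ℕ} (e1 e2 : α ≃ Fin m)
    (h : ∀ a b, e1 a < e1 b ↔ e2 a < e2 b) : e1 = e2 := by
  have hs : StrictMono (fun i => (e1.symm.trans e2) i) := by
    intro i j hij
    have h2 : e1 (e1.symm i) < e1 (e1.symm j) := by
      rw [e1.apply_symm_apply, e1.apply_symm_apply]; exact hij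
    exact (h _ _).mp h2
  have key := fin_equiv_strictMono_eq (e1.symm.trans e2) hs
  apply Equiv.ext
  intro a
  have h2 := key (e1 a)
  simp only [Equiv.trans_apply, Equiv.symm_apply_apply] at h2
  rw [h2]

lemma perm_eq_of_iff {π π' : Equiv.Perm (Fin n)} (h : ∀ a b, π a < π b ↔ π' a < π' b) :
    π = π' :=
  equiv_fin_unique π π' h

lemma exists_rank_equiv {α K : Type} [Fintype α] [DecidableEq α] {m : ℕ}
    (hm : Fintype.card α = m) (R : K → K → Prop)
    (htrans : ∀ {a b c}, R a b → R b c → R a c)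
    (hirr : ∀ a, ¬ R a a) (htri : ∀ a b, R a b ∨ a = b ∨ R b a)
    (k : α → K) (hk : Function.Injective k) :
    ∃ e : α ≃ Fin m, ∀ a b, (e a < e b ↔ R (k a) (k b)) := by
  classical
  have hbound : ∀ a : α, (univ.filter (fun b => R (k b) (k a))).card < m := by
    intro a
    rw [← hm, ← Finset.card_univ]
    apply Finset.card_lt_card
    rw [Finset.ssubset_iff_of_subset (Finset.subset_univ _)]
    exact ⟨a, Finset.mem_univ a, by simp [hirr (k a)]⟩
  set f : α → Fin m := fun a => ⟨(univ.filter (fun b => R (k b) (k a))).card, hbound a⟩ with hf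
  have hmono : ∀ a b, R (k a) (k b) → f a < f b := by
    intro a b hab
    rw [hf, Fin.mk_lt_mk]
    apply Finset.card_lt_card
    have hsub : (univ.filter (fun c => R (k c) (k a))) ⊆ (univ.filter (fun c => R (k c) (k b))) := by
      intro c hc
      rw [Finset.mem_filter] at hc ⊢
      exact ⟨hc.1, htrans hc.2 hab⟩
    rw [Finset.ssubset_iff_of_subset hsub]
    exact ⟨a, by simp [hab], by simp [hirr (k a)]⟩
  have hinj : Function.Injective f := by
    intro a b hab
    rcases htri (k a) (k b) with h | h | h
    · exact absurd (hmono a b h) (by rw [hab]; exact lt_irrefl _)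
    · exact hk h
    · exact absurd (hmono b a h) (by rw [hab]; exact lt_irrefl _)
  have hbij : Function.Bijective f :=
    (Fintype.bijective_iff_injective_and_card f).mpr ⟨hinj, by rw [Fintype.card_fin, hm]⟩
  refine ⟨Equiv.ofBijective f hbij, ?_⟩
  intro a b
  constructor
  · intro h
    rcases htri (k a) (k b) with h' | h' | h'
    · exact h'
    · exfalso
      rw [hk h'] at h
      exact lt_irrefl _ h
    · exact absurd (show f b < f a from hmono b a h') (not_lt.mpr (le_of_lt h))
  · exact hmono a b

/-! ### The two injections -/

lemma phi_ex (π : Equiv.Perm (Fin n)) (u : Fin n) :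
    ∃ e : {x // x ∈ Bu G r u} ≃ Fin ((Bu G r u).card),
      ∀ a b : {x // x ∈ Bu G r u}, (e a < e b ↔ π a.val < π b.val) :=
  exists_rank_equiv (Fintype.card_coe _) (· < ·)
    (fun hab hbc => lt_trans hab hbc) (fun a => lt_irrefl a) (fun a b => lt_trichotomy a b)
    (fun a => π a.val) (fun a b hab => Subtype.ext (π.injective hab))

noncomputable def phi (π : Equiv.Perm (Fin n)) (u : Fin n) :
    {x // x ∈ Bu G r u} ≃ Fin ((Bu G r u).card) :=
  (phi_ex (r := r) π u).choose

lemma phi_spec (π : Equiv.Perm (Fin n)) (u : Fin n) :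
    ∀ a b : {x // x ∈ Bu G r u}, (phi (r := r) π u a < phi π u b ↔ π a.val < π b.val) :=
  (phi_ex (r := r) π u).choose_spec

lemma phi_inj (hT : G.IsTree) (π π' : Equiv.Perm (Fin n)) (hπ : IsProjectiveArr G r π)
    (hπ' : IsProjectiveArr G r π') (h : ∀ u, phi (G := G) (r := r) π u = phi (G := G) (r := r) π' u) : π = π' := by
  have hloc : ∀ u a b : Fin n, a ∈ Bu G r u → b ∈ Bu G r u → (π a < π b ↔ π' a < π' b) := by
    intro u a b ha hb
    have h1 := phi_spec (r := r) π u ⟨a, ha⟩ ⟨b, hb⟩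
    have h2 := phi_spec (r := r) π' u ⟨a, ha⟩ ⟨b, hb⟩
    rw [← h1, ← h2, h u]
  have hcv := conv_of_proj hT hπ
  have hcv' := conv_of_proj hT hπ'
  apply perm_eq_of_iff
  intro a b
  exact ⟨compare_core hT hcv hcv' hloc a b,
    compare_core hT hcv' hcv (fun u a b ha hb => (hloc u a b ha hb).symm) a b⟩

lemma lexPerm_ex (hT : G.IsTree)
    (σ : ∀ u : Fin n, {x // x ∈ Bu G r u} ≃ Fin ((Bu G r u).card)) :
    ∃ e : Fin n ≃ Fin n, ∀ a b : Fin n, (e a < e b ↔ LL (sig hT σ a) (sig hT σ b)) :=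
  exists_rank_equiv (Fintype.card_fin n) LL
    (fun h1 h2 => LL_trans h1 h2) LL_irrefl (fun A B => LL_trichotomous A B)
    (sig hT σ) (fun a b h => sig_inj σ hT h)

noncomputable def lexPerm (hT : G.IsTree)
    (σ : ∀ u : Fin n, {x // x ∈ Bu G r u} ≃ Fin ((Bu G r u).card)) : Equiv.Perm (Fin n) :=
  (lexPerm_ex hT σ).choose

lemma lexPerm_spec (hT : G.IsTree)
    (σ : ∀ u : Fin n, {x // x ∈ Bu G r u} ≃ Fin ((Bu G r u).card)) :
    ∀ a b : Fin n, (lexPerm hT σ a < lexPerm hT σ b ↔ LL (sig hT σ a) (sig hT σ b)) :=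
  (lexPerm_ex hT σ).choose_spec

lemma lexPerm_conv (hT : G.IsTree)
    (σ : ∀ u : Fin n, {x // x ∈ Bu G r u} ≃ Fin ((Bu G r u).card)) :
    Conv G r (lexPerm hT σ) := by
  intro c x z y hx hz h1 h2
  exact sig_conv σ hT hx hz ((lexPerm_spec hT σ x y).mp h1) ((lexPerm_spec hT σ y z).mp h2)

lemma lexPerm_proj (hT : G.IsTree)
    (σ : ∀ u : Fin n, {x // x ∈ Bu G r u} ≃ Fin ((Bu G r u).card)) :
    IsProjectiveArr G r (lexPerm hT σ) :=
  proj_of_conv hT _ (lexPerm_conv hT σ)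

lemma lexPerm_local (hT : G.IsTree)
    (σ : ∀ u : Fin n, {x // x ∈ Bu G r u} ≃ Fin ((Bu G r u).card))
    {u a b : Fin n} (ha : a ∈ Bu G r u) (hb : b ∈ Bu G r u) :
    (lexPerm hT σ a < lexPerm hT σ b ↔ rankf σ u a < rankf σ u b) := by
  by_cases hne : a = b
  · subst hne
    simp [lt_irrefl]
  · rw [lexPerm_spec hT σ a b, sig_local σ hT ha hb hne]

lemma lexPerm_inj (hT : G.IsTree)
    (σ σ' : ∀ u : Fin n, {x // x ∈ Bu G r u} ≃ Fin ((Bu G r u).card))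
    (h : lexPerm hT σ = lexPerm hT σ') : σ = σ' := by
  funext u
  apply equiv_fin_unique
  intro a b
  by_cases hne : a = b
  · subst hne; simp [lt_irrefl]
  · have hne' : (a : Fin n) ≠ (b : Fin n) := fun hh => hne (Subtype.ext hh)
    have h1 : σ u a < σ u b ↔ rankf σ u a.val < rankf σ u b.val := by
      rw [rankf_lt_iff a.2 b.2]
    have h2 : σ' u a < σ' u b ↔ rankf σ' u a.val < rankf σ' u b.val := by
      rw [rankf_lt_iff a.2 b.2]
    rw [h1, h2, ← lexPerm_local hT σ a.2 b.2, ← lexPerm_local hT σ' a.2 b.2, h]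

lemma card_Bu (u : Fin n) : (Bu G r u).card = outDeg G r u + 1 := by
  rw [Bu, Finset.card_insert_of_notMem]
  · rfl
  · intro h
    rw [mem_chd] at h
    exact h.1.ne rfl

lemma card_LO :
    Fintype.card (∀ u : Fin n, {x // x ∈ Bu G r u} ≃ Fin ((Bu G r u).card)) =
      ∏ u : Fin n, (outDeg G r u + 1).factorial := by
  rw [Fintype.card_pi]
  apply Finset.prod_congr rfl
  intro u _
  have h1 : Fintype.card {x // x ∈ Bu G r u} = (Bu G r u).card := Fintype.card_coe _
  rw [Fintype.card_equiv (Fintype.equivFinOfCardEq h1), h1, card_Bu]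

end ProjArr

/-- The number of projective arrangements of a rooted tree equals
`∏_u (d_out(u) + 1)!`. -/
theorem card_projSet (n : ℕ) (G : SimpleGraph (Fin n)) (hT : G.IsTree) (r : Fin n) :
    (projSet G r).card = ∏ u : Fin n, (outDeg G r u + 1).factorial := by
  classical
  rw [← ProjArr.card_LO (G := G) (r := r)]
  have hle1 : (projSet G r).card ≤
      Fintype.card (∀ u : Fin n, {x // x ∈ ProjArr.Bu G r u} ≃ Fin ((ProjArr.Bu G r u).card)) := by
    rw [← Fintype.card_coe (projSet G r)]
    apply Fintype.card_le_of_injective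
      (fun π : {x // x ∈ projSet G r} => fun u => ProjArr.phi (G := G) (r := r) π.val u)
    intro π π' h
    have hπ : IsProjectiveArr G r π.val := (Finset.mem_filter.mp π.2).2
    have hπ' : IsProjectiveArr G r π'.val := (Finset.mem_filter.mp π'.2).2
    exact Subtype.ext (ProjArr.phi_inj hT π.val π'.val hπ hπ' (fun u => congrFun h u))
  have hle2 : Fintype.card
      (∀ u : Fin n, {x // x ∈ ProjArr.Bu G r u} ≃ Fin ((ProjArr.Bu G r u).card)) ≤
        (projSet G r).card := by
    rw [← Fintype.card_coe (projSet G r)]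
    apply Fintype.card_le_of_injective
      (fun σ => (⟨ProjArr.lexPerm hT σ, by
        rw [projSet, Finset.mem_filter]
        exact ⟨Finset.mem_univ _, ProjArr.lexPerm_proj hT σ⟩⟩ : {x // x ∈ projSet G r}))
    intro σ σ' h
    exact ProjArr.lexPerm_inj hT σ σ' (congrArg Subtype.val h)
  omega
end

section
/- The number of planar linear arrangements of a free tree T on n vertices equals n · ∏_{u ∈ V} deg(u)!. -/
open Finset

attribute [local instance] Classical.propDecidable

namespace PlanarAux

open SimpleGraph Walk

variable {n : ℕ} {G : SimpleGraph (Fin n)}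

lemma dist_split (hc : G.Connected) {u v w : Fin n} (p : G.Walk u v)
    (hp : p.length = G.dist u v) (hw : w ∈ p.support) :
    G.dist u w + G.dist w v = G.dist u v := by
  obtain ⟨q, r, rfl⟩ := Walk.mem_support_iff_exists_append.mp hw
  have h1 := G.dist_le q
  have h2 := G.dist_le r
  have h3 := hc.dist_triangle (u := u) (v := w) (w := v)
  rw [Walk.length_append] at hp
  omega

lemma mem_subtree {r u v : Fin n} :
    v ∈ subtreeFinset G r u ↔ G.dist r v = G.dist r u + G.dist u v := by
  simp [subtreeFinset]

lemma self_mem_subtree (r u : Fin n) : u ∈ subtreeFinset G r u := by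
  simp [mem_subtree]

lemma root_mem_subtree (hc : G.Connected) {r u : Fin n} :
    r ∈ subtreeFinset G r u ↔ u = r := by
  rw [mem_subtree, dist_self]
  constructor
  · intro h
    have h1 : G.dist r u = 0 := by omega
    exact ((hc.dist_eq_zero_iff).mp h1).symm
  · rintro rfl; simp [SimpleGraph.dist_self]

lemma mem_subtree_of_between {r u w v : Fin n} (hc : G.Connected)
    (hv : v ∈ subtreeFinset G r u) (hw : G.dist u w + G.dist w v = G.dist u v) :
    w ∈ subtreeFinset G r u := by
  rw [mem_subtree] at *
  have h1 := hc.dist_triangle (u := r) (v := u) (w := w)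
  have h2 := hc.dist_triangle (u := r) (v := w) (w := v)
  omega

lemma support_subset_subtree {r u v w : Fin n} (hc : G.Connected)
    (hv : v ∈ subtreeFinset G r u)
    (p : G.Walk u v) (hp : p.length = G.dist u v) (hw : w ∈ p.support) :
    w ∈ subtreeFinset G r u :=
  mem_subtree_of_between hc hv (dist_split hc p hp hw)

lemma geodesic_avoids {r u t w : Fin n} (hc : G.Connected)
    (ht : t ∉ subtreeFinset G r u)
    (p : G.Walk r t) (hp : p.length = G.dist r t) (hw : w ∈ p.support) :
    w ∉ subtreeFinset G r u := by
  intro hmem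
  apply ht
  have hsplit := dist_split hc p hp hw
  rw [mem_subtree] at *
  have h1 := hc.dist_triangle (u := u) (v := w) (w := t)
  have h2 := hc.dist_triangle (u := r) (v := u) (w := t)
  omega

lemma adj_dist_cases (hT : G.IsTree) {r a b : Fin n} (hab : G.Adj a b) :
    G.dist r b = G.dist r a + 1 ∨ G.dist r a = G.dist r b + 1 := by
  have hc := hT.isConnected
  have hab1 : G.dist a b = 1 := (dist_eq_one_iff_adj).mpr hab
  have hba1 : G.dist b a = 1 := (dist_eq_one_iff_adj).mpr hab.symm
  have t1 := hc.dist_triangle (u := r) (v := a) (w := b)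
  have t2 := hc.dist_triangle (u := r) (v := b) (w := a)
  -- suffices to rule out equality
  by_contra hcon
  push_neg at hcon
  have heq : G.dist r a = G.dist r b := by omega
  obtain ⟨Pa, hPaP, hPa⟩ := hc.exists_path_of_dist a r
  obtain ⟨Pb, hPbP, hPb⟩ := hc.exists_path_of_dist b r
  have hanb : a ∉ Pb.support := by
    intro hmem
    have := dist_split hc Pb hPb hmem
    have hda : G.dist r a = G.dist a r := dist_comm ..
    have hdb : G.dist r b = G.dist b r := dist_comm ..
    omega
  have hW : (Walk.cons hab Pb).IsPath := hPbP.cons hanb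
  obtain ⟨P, _, huniq⟩ := hT.existsUnique_path a r
  have e1 := huniq _ hW
  have e2 := huniq _ hPaP
  have : (Walk.cons hab Pb).length = Pa.length := by
    rw [e1, e2]
  rw [Walk.length_cons, hPa, hPb] at this
  have hda : G.dist r a = G.dist a r := dist_comm ..
  have hdb : G.dist r b = G.dist b r := dist_comm ..
  omega

lemma parent_unique (hT : G.IsTree) {b v w w' : Fin n} (h1 : G.Adj w v) (h2 : G.Adj w' v)
    (hd1 : G.dist b v = G.dist b w + 1) (hd2 : G.dist b v = G.dist b w' + 1) : w = w' := by
  have hc := hT.isConnected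
  obtain ⟨Pw, hPwP, hPw⟩ := hc.exists_path_of_dist w b
  obtain ⟨Pw', hPw'P, hPw'⟩ := hc.exists_path_of_dist w' b
  have hcomm : ∀ x y : Fin n, G.dist x y = G.dist y x := fun x y => dist_comm ..
  have hv1 : v ∉ Pw.support := by
    intro hmem
    have := dist_split hc Pw hPw hmem
    have h1' : G.dist w v = 1 := (dist_eq_one_iff_adj).mpr h1
    rw [hcomm w v, hcomm w b, hcomm v b] at this
    omega
  have hv2 : v ∉ Pw'.support := by
    intro hmem
    have := dist_split hc Pw' hPw' hmem
    have h2' : G.dist w' v = 1 := (dist_eq_one_iff_adj).mpr h2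
    rw [hcomm w' v, hcomm w' b, hcomm v b] at this
    omega
  have hW1 : (Walk.cons h1.symm Pw).IsPath := hPwP.cons hv1
  have hW2 : (Walk.cons h2.symm Pw').IsPath := hPw'P.cons hv2
  obtain ⟨P, _, huniq⟩ := hT.existsUnique_path v b
  have e1 := huniq _ hW1
  have e2 := huniq _ hW2
  have heq : (Walk.cons h1.symm Pw) = (Walk.cons h2.symm Pw') := by
    rw [e1, e2]
  have := congrArg (fun p => Walk.getVert p 1) heq
  simpa using this

lemma exists_parent (hc : G.Connected) {r v : Fin n} (hv : v ≠ r) :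
    ∃ w, G.Adj w v ∧ G.dist r v = G.dist r w + 1 := by
  obtain ⟨p0, hp0⟩ := hc.exists_walk_length_eq_dist v r
  cases p0 with
  | nil => exact absurd rfl hv
  | @cons _ w _ h q =>
    refine ⟨w, h.symm, ?_⟩
    rw [Walk.length_cons] at hp0
    have h1 := G.dist_le q
    have t1 := hc.dist_triangle (u := v) (v := w) (w := r)
    have t2 := hc.dist_triangle (u := w) (v := v) (w := r)
    have hwv : G.dist w v = 1 := (dist_eq_one_iff_adj).mpr h.symm
    have hvw : G.dist v w = 1 := (dist_eq_one_iff_adj).mpr h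
    have c1 : G.dist r v = G.dist v r := dist_comm ..
    have c2 : G.dist r w = G.dist w r := dist_comm ..
    omega

lemma exists_child (hc : G.Connected) {r q x : Fin n} (hx : x ∈ subtreeFinset G r q)
    (hxq : x ≠ q) :
    ∃ c, G.Adj q c ∧ G.dist r c = G.dist r q + 1 ∧ x ∈ subtreeFinset G r c := by
  obtain ⟨p0, hp0⟩ := hc.exists_walk_length_eq_dist q x
  cases p0 with
  | nil => exact absurd rfl hxq.symm
  | @cons _ c _ h qw =>
    rw [Walk.length_cons] at hp0
    rw [mem_subtree] at hx
    have h1 := G.dist_le qw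
    have t1 := hc.dist_triangle (u := q) (v := c) (w := x)
    have t2 := hc.dist_triangle (u := r) (v := q) (w := c)
    have t3 := hc.dist_triangle (u := r) (v := c) (w := x)
    have hqc : G.dist q c = 1 := (dist_eq_one_iff_adj).mpr h
    refine ⟨c, h, by omega, ?_⟩
    rw [mem_subtree]
    omega

lemma child_subtree_subset (hc : G.Connected) {r q c : Fin n} (hqc : G.Adj q c)
    (hd : G.dist r c = G.dist r q + 1) :
    subtreeFinset G r c ⊆ subtreeFinset G r q := by
  intro v hv
  rw [mem_subtree] at *
  have t1 := hc.dist_triangle (u := q) (v := c) (w := v)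
  have t2 := hc.dist_triangle (u := r) (v := q) (w := v)
  have hqc1 : G.dist q c = 1 := (dist_eq_one_iff_adj).mpr hqc
  omega

lemma parent_not_mem_subtree (hc : G.Connected) {r q c : Fin n} (hqc : G.Adj q c)
    (hd : G.dist r c = G.dist r q + 1) : q ∉ subtreeFinset G r c := by
  rw [mem_subtree]
  have : G.dist c q = 1 := (dist_eq_one_iff_adj).mpr hqc.symm
  omega

lemma child_subtree_disjoint (hT : G.IsTree) {r q c c' x : Fin n}
    (h1 : G.Adj q c) (h2 : G.Adj q c')
    (hd1 : G.dist r c = G.dist r q + 1) (hd2 : G.dist r c' = G.dist r q + 1)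
    (hx1 : x ∈ subtreeFinset G r c) (hx2 : x ∈ subtreeFinset G r c') : c = c' := by
  have hc := hT.isConnected
  have hxq : x ∈ subtreeFinset G r q := child_subtree_subset hc h1 hd1 hx1
  rw [mem_subtree] at hx1 hx2 hxq
  have t1 := hc.dist_triangle (u := q) (v := c) (w := x)
  have t2 := hc.dist_triangle (u := q) (v := c') (w := x)
  have e1 : G.dist q c = 1 := (dist_eq_one_iff_adj).mpr h1
  have e2 : G.dist q c' = 1 := (dist_eq_one_iff_adj).mpr h2
  have hcq : G.dist x q = G.dist x c + 1 := by
    rw [dist_comm (u := x) (v := q), dist_comm (u := x) (v := c)]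
    omega
  have hcq' : G.dist x q = G.dist x c' + 1 := by
    rw [dist_comm (u := x) (v := q), dist_comm (u := x) (v := c')]
    omega
  exact parent_unique hT h1.symm h2.symm hcq hcq'

lemma adj_leave_subtree (hT : G.IsTree) {r q c a b : Fin n} (hqc : G.Adj q c)
    (hdc : G.dist r c = G.dist r q + 1)
    (ha : a ∈ subtreeFinset G r c) (hab : G.Adj a b)
    (hb : b ∉ subtreeFinset G r c) : a = c ∧ b = q := by
  have hc := hT.isConnected
  have hcases := adj_dist_cases hT (r := r) hab
  have hma := mem_subtree.mp ha
  rcases hcases with hup | hdown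
  · exfalso
    apply hb
    rw [mem_subtree]
    have t1 := hc.dist_triangle (u := c) (v := a) (w := b)
    have t2 := hc.dist_triangle (u := r) (v := c) (w := b)
    have : G.dist a b = 1 := (dist_eq_one_iff_adj).mpr hab
    omega
  · have hac : a = c := by
      by_contra hne
      obtain ⟨w, hwadj, hwd⟩ := exists_parent hc (r := c) hne
      have hwmem : w ∈ subtreeFinset G r c := by
        rw [mem_subtree]
        have t1 := hc.dist_triangle (u := r) (v := c) (w := w)
        have t2 := hc.dist_triangle (u := r) (v := w) (w := a)
        have : G.dist w a = 1 := (dist_eq_one_iff_adj).mpr hwadj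
        omega
      have hwr : G.dist r a = G.dist r w + 1 := by
        have hmw := mem_subtree.mp hwmem
        have : G.dist w a = 1 := (dist_eq_one_iff_adj).mpr hwadj
        have t2 := hc.dist_triangle (u := r) (v := w) (w := a)
        omega
      have : b = w := parent_unique hT hab.symm hwadj (b := r) hdown hwr
      exact hb (this ▸ hwmem)
    subst hac
    refine ⟨rfl, ?_⟩
    exact parent_unique hT hab.symm hqc (b := r) (by omega) (by omega)

end PlanarAux
namespace PlanarAux

variable {n : ℕ} {G : SimpleGraph (Fin n)}

/-- Crossing-freeness of the identity arrangement. -/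
def NoCross (G : SimpleGraph (Fin n)) : Prop :=
  ∀ a b c d : Fin n, G.Adj a b → G.Adj c d → a < c → c < b → b < d → False

/-- Master interval lemma: subtrees (w.r.t. the root placed first) are intervals. -/
lemma subtree_interval (hT : G.IsTree) (hpl : NoCross G)
    {z u a b t : Fin n} (hz : ∀ x, z ≤ x)
    (ha : a ∈ subtreeFinset G z u) (hb : b ∈ subtreeFinset G z u)
    (ht : t ∉ subtreeFinset G z u) (h1 : a < t) (h2 : t < b) : False := by
  have hc := hT.isConnected
  by_cases huz : u = z
  · subst huz
    exact ht (by rw [mem_subtree, SimpleGraph.dist_self]; simp)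
  have hznot : z ∉ subtreeFinset G z u := fun hmem => huz ((root_mem_subtree hc).mp hmem)
  -- walk from a to b inside the subtree
  obtain ⟨pa, hpa⟩ := hc.exists_walk_length_eq_dist u a
  obtain ⟨pb, hpb⟩ := hc.exists_walk_length_eq_dist u b
  set W : G.Walk a b := pa.reverse.append pb with hW
  have hWsup : ∀ w ∈ W.support, w ∈ subtreeFinset G z u := by
    intro w hw
    rw [hW, SimpleGraph.Walk.mem_support_append_iff] at hw
    rcases hw with hw | hw
    · rw [SimpleGraph.Walk.support_reverse, List.mem_reverse] at hw
      exact support_subset_subtree hc ha pa hpa hw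
    · exact support_subset_subtree hc hb pb hpb hw
  obtain ⟨d, hd, hdfst, hdsnd⟩ :=
    W.exists_boundary_dart {x | x ≤ t} (le_of_lt h1) (not_le.mpr h2)
  have hy : d.fst ∈ subtreeFinset G z u :=
    hWsup _ (SimpleGraph.Walk.dart_fst_mem_support_of_mem_darts _ hd)
  have hzz : d.snd ∈ subtreeFinset G z u :=
    hWsup _ (SimpleGraph.Walk.dart_snd_mem_support_of_mem_darts _ hd)
  have hyt : d.fst < t := lt_of_le_of_ne hdfst (fun h => ht (h ▸ hy))
  have htz : t < d.snd := not_le.mp hdsnd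
  -- geodesic from z to t avoids the subtree
  obtain ⟨pt, hpt⟩ := hc.exists_walk_length_eq_dist z t
  have hptav : ∀ w ∈ pt.support, w ∉ subtreeFinset G z u :=
    fun w hw => geodesic_avoids hc ht pt hpt hw
  have hz2 : z ∉ {x : Fin n | d.fst < x ∧ x < d.snd} := by
    intro hmem
    have : z < d.fst := lt_of_le_of_ne (hz _) (fun h => hznot (h ▸ hy))
    exact absurd hmem.1 (not_lt.mpr (le_of_lt this))
  obtain ⟨e, he, hefst, hesnd⟩ :=
    pt.reverse.exists_boundary_dart {x : Fin n | d.fst < x ∧ x < d.snd} ⟨hyt, htz⟩ hz2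
  have hes1 : e.fst ∈ pt.support := by
    have := SimpleGraph.Walk.dart_fst_mem_support_of_mem_darts _ he
    rwa [SimpleGraph.Walk.support_reverse, List.mem_reverse] at this
  have hes2 : e.snd ∈ pt.support := by
    have := SimpleGraph.Walk.dart_snd_mem_support_of_mem_darts _ he
    rwa [SimpleGraph.Walk.support_reverse, List.mem_reverse] at this
  have hne1 : e.snd ≠ d.fst := fun h => (hptav _ hes2) (h ▸ hy)
  have hne2 : e.snd ≠ d.snd := fun h => (hptav _ hes2) (h ▸ hzz)
  have hcase : e.snd < d.fst ∨ d.snd < e.snd := by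
    rcases lt_trichotomy e.snd d.fst with h | h | h
    · exact Or.inl h
    · exact absurd h hne1
    rcases lt_trichotomy e.snd d.snd with h' | h' | h'
    · exact absurd ⟨h, h'⟩ hesnd
    · exact absurd h' hne2
    · exact Or.inr h'
  rcases hcase with hlt | hgt
  · exact hpl e.snd e.fst d.fst d.snd e.adj.symm d.adj hlt hefst.1 hefst.2
  · exact hpl d.fst d.snd e.fst e.snd d.adj e.adj hefst.1 hefst.2 hgt

end PlanarAux
namespace PlanarAux

/-- `Btw g q a`: position `a` lies strictly between insertion gap `g` and vertex position `q`. -/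
def Btw (g q a : ℕ) : Prop := (g ≤ a ∧ a < q) ∨ (q < a ∧ a < g)

/-- gap `g` is valid for attaching a new leaf at `q`. -/
def ValidGap {m : ℕ} (H : SimpleGraph (Fin (m+1))) (q : Fin (m+1)) (g : Fin (m+2)) : Prop :=
  0 < (g : ℕ) ∧ ∀ a b : Fin (m+1), H.Adj a b → a ≠ q → b ≠ q →
    (Btw (g:ℕ) (q:ℕ) (a:ℕ) ↔ Btw (g:ℕ) (q:ℕ) (b:ℕ))

variable {m : ℕ} {H : SimpleGraph (Fin (m+1))}

/-- children of `q` (rooted at vertex `0`). -/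
noncomputable def chFinset (H : SimpleGraph (Fin (m+1))) (q : Fin (m+1)) : Finset (Fin (m+1)) :=
  Finset.univ.filter (fun c => H.Adj q c ∧ H.dist 0 c = H.dist 0 q + 1)

lemma mem_ch {q c : Fin (m+1)} :
    c ∈ chFinset H q ↔ H.Adj q c ∧ H.dist 0 c = H.dist 0 q + 1 := by
  simp [chFinset]

lemma ch_ne_zero {q c : Fin (m+1)} (hc : c ∈ chFinset H q) : c ≠ 0 := by
  rintro rfl
  have := (mem_ch.mp hc).2
  rw [SimpleGraph.dist_self] at this
  omega

lemma q_not_mem_ch_subtree (hT : H.IsTree) {q c : Fin (m+1)} (hc : c ∈ chFinset H q) :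
    q ∉ subtreeFinset H 0 c :=
  parent_not_mem_subtree hT.isConnected (mem_ch.mp hc).1 (mem_ch.mp hc).2

/-- both on the same side of `q`. -/
lemma ch_same_side (hT : H.IsTree) (hpl : NoCross H) {q c x y : Fin (m+1)}
    (hc : c ∈ chFinset H q) (hx : x ∈ subtreeFinset H 0 c) (hy : y ∈ subtreeFinset H 0 c)
    (h1 : x < q) (h2 : q < y) : False :=
  subtree_interval hT hpl (Fin.zero_le) hx hy (q_not_mem_ch_subtree hT hc) h1 h2

lemma deg_eq (hT : H.IsTree) (q : Fin (m+1)) :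
    H.degree q = (chFinset H q).card + (if 0 < (q:ℕ) then 1 else 0) := by
  classical
  have hc := hT.isConnected
  rw [← SimpleGraph.card_neighborFinset_eq_degree]
  have hsplit := Finset.card_filter_add_card_filter_not
    (s := H.neighborFinset q) (p := fun c => H.dist 0 c = H.dist 0 q + 1)
  have h1 : (H.neighborFinset q).filter (fun c => H.dist 0 c = H.dist 0 q + 1) = chFinset H q := by
    ext c
    simp only [chFinset, Finset.mem_filter, Finset.mem_univ, true_and,
      SimpleGraph.mem_neighborFinset]
  have h2 : ((H.neighborFinset q).filter (fun c => ¬ H.dist 0 c = H.dist 0 q + 1)).card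
      = (if 0 < (q:ℕ) then 1 else 0) := by
    by_cases hq : 0 < (q:ℕ)
    · have hqne : q ≠ 0 := by
        intro h; rw [h] at hq; simp at hq
      obtain ⟨w, hw, hwd⟩ := exists_parent hc (r := (0 : Fin (m+1))) hqne
      rw [if_pos hq]
      have : (H.neighborFinset q).filter (fun c => ¬ H.dist 0 c = H.dist 0 q + 1) = {w} := by
        ext b
        simp only [Finset.mem_filter, SimpleGraph.mem_neighborFinset, Finset.mem_singleton]
        constructor
        · rintro ⟨hadj, hnd⟩
          rcases adj_dist_cases hT (r := (0 : Fin (m+1))) hadj with h | h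
          · exact absurd h hnd
          · exact parent_unique hT (b := (0 : Fin (m+1))) hadj.symm hw (by omega) (by omega)
        · rintro rfl
          exact ⟨hw.symm, by omega⟩
      rw [this, Finset.card_singleton]
    · rw [if_neg hq]
      have hq0 : q = 0 := by
        ext
        simpa using Nat.eq_zero_of_not_pos hq
      subst hq0
      rw [Finset.card_eq_zero]
      ext b
      simp only [Finset.mem_filter, SimpleGraph.mem_neighborFinset, Finset.notMem_empty,
        iff_false, not_and]
      intro hadj hnd
      rcases adj_dist_cases hT (r := (0 : Fin (m+1))) hadj with h | h
      · exact hnd h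
      · rw [SimpleGraph.dist_self] at h; omega
  rw [h1] at hsplit
  rw [h2] at hsplit
  omega

/-- If `g` is a valid gap, every vertex strictly between `g` and `q` lies in the subtree of a
child of `q`, whose subtree moreover lies entirely between `g` and `q`. -/
lemma keyL2 (hT : H.IsTree) {q : Fin (m+1)} {g : Fin (m+2)}
    (hval : ValidGap H q g) {x : Fin (m+1)} (hx : Btw (g:ℕ) (q:ℕ) (x:ℕ)) :
    ∃ c, c ∈ chFinset H q ∧ x ∈ subtreeFinset H 0 c ∧
      ∀ y ∈ subtreeFinset H 0 c, Btw (g:ℕ) (q:ℕ) (y:ℕ) := by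
  have hc := hT.isConnected
  have hzero : ¬ Btw (g:ℕ) (q:ℕ) ((0 : Fin (m+1)):ℕ) := by
    have := hval.1
    simp only [Btw, Fin.val_zero]
    omega
  have hqB : ¬ Btw (g:ℕ) (q:ℕ) (q:ℕ) := by simp only [Btw]; omega
  -- the geodesic from x to 0 passes through q
  obtain ⟨p, hp⟩ := hc.exists_walk_length_eq_dist x 0
  obtain ⟨d, hd, hdfst, hdsnd⟩ :=
    p.exists_boundary_dart {v : Fin (m+1) | Btw (g:ℕ) (q:ℕ) (v:ℕ)} hx hzero
  have hdq : d.snd = q := by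
    by_contra hne
    have hfq : d.fst ≠ q := fun h => hqB (h ▸ hdfst)
    exact hdsnd ((hval.2 d.fst d.snd d.adj hfq hne).mp hdfst)
  have hqsup : q ∈ p.support := hdq ▸ SimpleGraph.Walk.dart_snd_mem_support_of_mem_darts _ hd
  have hxDq : x ∈ subtreeFinset H 0 q := by
    have hsp := dist_split hc p hp hqsup
    rw [mem_subtree]
    have c1 : H.dist x q = H.dist q x := SimpleGraph.dist_comm ..
    have c2 : H.dist x 0 = H.dist 0 x := SimpleGraph.dist_comm ..
    have c3 : H.dist q 0 = H.dist 0 q := SimpleGraph.dist_comm ..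
    omega
  have hxq : x ≠ q := fun h => hqB (h ▸ hx)
  obtain ⟨c, hadj, hdist, hxc⟩ := exists_child hc hxDq hxq
  have hch : c ∈ chFinset H q := mem_ch.mpr ⟨hadj, hdist⟩
  refine ⟨c, hch, hxc, ?_⟩
  intro y hy
  by_contra hyB
  obtain ⟨px, hpx⟩ := hc.exists_walk_length_eq_dist c x
  obtain ⟨py, hpy⟩ := hc.exists_walk_length_eq_dist c y
  set W := px.reverse.append py with hW
  have hWsup : ∀ w ∈ W.support, w ∈ subtreeFinset H 0 c := by
    intro w hw
    rw [hW, SimpleGraph.Walk.mem_support_append_iff] at hw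
    rcases hw with hw | hw
    · rw [SimpleGraph.Walk.support_reverse, List.mem_reverse] at hw
      exact support_subset_subtree hc hxc px hpx hw
    · exact support_subset_subtree hc hy py hpy hw
  obtain ⟨e, he, hefst, hesnd⟩ :=
    W.exists_boundary_dart {v : Fin (m+1) | Btw (g:ℕ) (q:ℕ) (v:ℕ)} hx hyB
  have h1 : e.fst ∈ subtreeFinset H 0 c :=
    hWsup _ (SimpleGraph.Walk.dart_fst_mem_support_of_mem_darts _ he)
  have h2 : e.snd ∈ subtreeFinset H 0 c :=
    hWsup _ (SimpleGraph.Walk.dart_snd_mem_support_of_mem_darts _ he)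
  have hf : e.fst ≠ q := fun h => q_not_mem_ch_subtree hT hch (h ▸ h1)
  have hs : e.snd ≠ q := fun h => q_not_mem_ch_subtree hT hch (h ▸ h2)
  exact hesnd ((hval.2 e.fst e.snd e.adj hf hs).mp hefst)

end PlanarAux
namespace PlanarAux

variable {m : ℕ} {H : SimpleGraph (Fin (m+1))}

noncomputable def minD (H : SimpleGraph (Fin (m+1))) (c : Fin (m+1)) : Fin (m+1) :=
  (subtreeFinset H 0 c).min' ⟨c, self_mem_subtree _ _⟩

noncomputable def maxD (H : SimpleGraph (Fin (m+1))) (c : Fin (m+1)) : Fin (m+1) :=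
  (subtreeFinset H 0 c).max' ⟨c, self_mem_subtree _ _⟩

lemma minD_mem (c : Fin (m+1)) : minD H c ∈ subtreeFinset H 0 c := Finset.min'_mem _ _
lemma maxD_mem (c : Fin (m+1)) : maxD H c ∈ subtreeFinset H 0 c := Finset.max'_mem _ _

lemma coverage_left (hT : H.IsTree) (hpl : NoCross H) {q c : Fin (m+1)}
    (hch : c ∈ chFinset H q) {x : Fin (m+1)}
    (h1 : (minD H c : ℕ) ≤ (x:ℕ)) (h2 : (x:ℕ) < (q:ℕ)) :
    ∃ c', c' ∈ chFinset H q ∧ x ∈ subtreeFinset H 0 c' ∧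
      ∀ y ∈ subtreeFinset H 0 c', (minD H c : ℕ) ≤ (y:ℕ) ∧ (y:ℕ) < (q:ℕ) := by
  have hc := hT.isConnected
  have hμmem : minD H c ∈ subtreeFinset H 0 c := minD_mem c
  have hμDq : minD H c ∈ subtreeFinset H 0 q :=
    child_subtree_subset hc (mem_ch.mp hch).1 (mem_ch.mp hch).2 hμmem
  have hqDq : q ∈ subtreeFinset H 0 q := self_mem_subtree _ _
  have hxDq : x ∈ subtreeFinset H 0 q := by
    by_contra hnot
    have hne : (minD H c : ℕ) ≠ (x:ℕ) := fun h => hnot (Fin.ext h ▸ hμDq)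
    exact subtree_interval hT hpl Fin.zero_le hμDq hqDq hnot
      (Fin.lt_def.mpr (by omega)) (Fin.lt_def.mpr h2)
  have hxq : x ≠ q := fun h => by rw [h] at h2; omega
  obtain ⟨c', hadj, hdist, hxc'⟩ := exists_child hc hxDq hxq
  have hch' : c' ∈ chFinset H q := mem_ch.mpr ⟨hadj, hdist⟩
  refine ⟨c', hch', hxc', ?_⟩
  intro y hy
  constructor
  · by_contra hlt
    push_neg at hlt
    have hcc' : c = c' → False := by
      intro h
      subst h
      have hmin := Finset.min'_le _ _ hy
      have : (minD H c : ℕ) ≤ (y : ℕ) := hmin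
      omega
    have hμnot : minD H c ∉ subtreeFinset H 0 c' := by
      intro hmem
      exact hcc' (child_subtree_disjoint hT (mem_ch.mp hch).1 hadj
        (mem_ch.mp hch).2 hdist hμmem hmem)
    have hne : (minD H c : ℕ) ≠ (x:ℕ) := fun h => hμnot (Fin.ext h ▸ hxc')
    exact subtree_interval hT hpl Fin.zero_le hy hxc' hμnot
      (Fin.lt_def.mpr (by omega)) (Fin.lt_def.mpr (by omega))
  · by_contra hge
    push_neg at hge
    have hyq : y ≠ q := fun h => q_not_mem_ch_subtree hT hch' (h ▸ hy)
    have hqy : (q:ℕ) < (y:ℕ) := by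
      rcases Nat.lt_or_ge (q:ℕ) (y:ℕ) with h | h
      · exact h
      · exact absurd (Fin.ext (by omega) : y = q) hyq
    exact ch_same_side hT hpl hch' hxc' hy (Fin.lt_def.mpr h2) (Fin.lt_def.mpr hqy)

lemma coverage_right (hT : H.IsTree) (hpl : NoCross H) {q c : Fin (m+1)}
    (hch : c ∈ chFinset H q) {x : Fin (m+1)}
    (h1 : (q:ℕ) < (x:ℕ)) (h2 : (x:ℕ) ≤ (maxD H c : ℕ)) :
    ∃ c', c' ∈ chFinset H q ∧ x ∈ subtreeFinset H 0 c' ∧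
      ∀ y ∈ subtreeFinset H 0 c', (q:ℕ) < (y:ℕ) ∧ (y:ℕ) ≤ (maxD H c : ℕ) := by
  have hc := hT.isConnected
  have hμmem : maxD H c ∈ subtreeFinset H 0 c := maxD_mem c
  have hμDq : maxD H c ∈ subtreeFinset H 0 q :=
    child_subtree_subset hc (mem_ch.mp hch).1 (mem_ch.mp hch).2 hμmem
  have hqDq : q ∈ subtreeFinset H 0 q := self_mem_subtree _ _
  have hxDq : x ∈ subtreeFinset H 0 q := by
    by_contra hnot
    have hne : (maxD H c : ℕ) ≠ (x:ℕ) := fun h => hnot (Fin.ext h ▸ hμDq)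
    exact subtree_interval hT hpl Fin.zero_le hqDq hμDq hnot
      (Fin.lt_def.mpr h1) (Fin.lt_def.mpr (by omega))
  have hxq : x ≠ q := fun h => by rw [h] at h1; omega
  obtain ⟨c', hadj, hdist, hxc'⟩ := exists_child hc hxDq hxq
  have hch' : c' ∈ chFinset H q := mem_ch.mpr ⟨hadj, hdist⟩
  refine ⟨c', hch', hxc', ?_⟩
  intro y hy
  constructor
  · by_contra hge
    push_neg at hge
    have hyq : y ≠ q := fun h => q_not_mem_ch_subtree hT hch' (h ▸ hy)
    have hqy : (y:ℕ) < (q:ℕ) := by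
      rcases Nat.lt_or_ge (y:ℕ) (q:ℕ) with h | h
      · exact h
      · exact absurd (Fin.ext (by omega) : y = q) hyq
    exact ch_same_side hT hpl hch' hy hxc' (Fin.lt_def.mpr hqy) (Fin.lt_def.mpr h1)
  · by_contra hlt
    push_neg at hlt
    have hcc' : c = c' → False := by
      intro h
      subst h
      have hmax := Finset.le_max' _ _ hy
      have : (y : ℕ) ≤ (maxD H c : ℕ) := hmax
      omega
    have hμnot : maxD H c ∉ subtreeFinset H 0 c' := by
      intro hmem
      exact hcc' (child_subtree_disjoint hT (mem_ch.mp hch).1 hadj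
        (mem_ch.mp hch).2 hdist hμmem hmem)
    have hne : (maxD H c : ℕ) ≠ (x:ℕ) := fun h => hμnot (Fin.ext h ▸ hxc')
    exact subtree_interval hT hpl Fin.zero_le hxc' hy hμnot
      (Fin.lt_def.mpr (by omega)) (Fin.lt_def.mpr (by omega))

end PlanarAux
namespace PlanarAux

variable {m : ℕ} {H : SimpleGraph (Fin (m+1))}

theorem core_count (hT : H.IsTree) (hpl : NoCross H) (q : Fin (m+1)) :
    (Finset.univ.filter (fun g : Fin (m+2) => ValidGap H q g)).card = H.degree q + 1 := by
  classical
  have hc := hT.isConnected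
  set CL := (chFinset H q).filter (fun c => c < q) with hCL
  set CR := (chFinset H q).filter (fun c => q < c) with hCR
  set VL : Finset (Fin (m+2)) := CL.image (fun c => (minD H c).castSucc) with hVL
  set VR : Finset (Fin (m+2)) := CR.image (fun c => (maxD H c).succ) with hVR
  set V0 : Finset (Fin (m+2)) :=
    (if 0 < (q:ℕ) then {(Fin.castSucc q), q.succ} else {q.succ}) with hV0
  -- value bounds for the pieces
  have hVLval : ∀ g ∈ VL, (g:ℕ) < (q:ℕ) := by
    intro g hg
    rw [hVL, Finset.mem_image] at hg
    obtain ⟨c, hcmem, rfl⟩ := hg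
    rw [hCL, Finset.mem_filter] at hcmem
    have h1 : (minD H c : ℕ) ≤ (c:ℕ) := Finset.min'_le _ _ (self_mem_subtree _ _)
    have h2 : (c:ℕ) < (q:ℕ) := Fin.lt_def.mp hcmem.2
    simp only [Fin.coe_castSucc]
    omega
  have hVRval : ∀ g ∈ VR, (q:ℕ) + 2 ≤ (g:ℕ) := by
    intro g hg
    rw [hVR, Finset.mem_image] at hg
    obtain ⟨c, hcmem, rfl⟩ := hg
    rw [hCR, Finset.mem_filter] at hcmem
    have h1 : (c:ℕ) ≤ (maxD H c : ℕ) := Finset.le_max' _ _ (self_mem_subtree _ _)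
    have h2 : (q:ℕ) < (c:ℕ) := Fin.lt_def.mp hcmem.2
    simp only [Fin.val_succ]
    omega
  have hV0val : ∀ g ∈ V0, (g:ℕ) = (q:ℕ) ∨ (g:ℕ) = (q:ℕ) + 1 := by
    intro g hg
    rw [hV0] at hg
    by_cases h : 0 < (q:ℕ)
    · rw [if_pos h] at hg
      rcases Finset.mem_insert.mp hg with rfl | hg
      · left; simp
      · right; rw [Finset.mem_singleton] at hg; subst hg; simp
    · rw [if_neg h] at hg
      rw [Finset.mem_singleton] at hg; subst hg; right; simp
  -- the valid gaps are exactly VL ∪ VR ∪ V0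
  have hseteq : Finset.univ.filter (fun g : Fin (m+2) => ValidGap H q g) = VL ∪ VR ∪ V0 := by
    ext g
    simp only [Finset.mem_filter, Finset.mem_univ, true_and, Finset.mem_union]
    constructor
    · intro hval
      have hg0 := hval.1
      rcases Nat.lt_trichotomy (g:ℕ) (q:ℕ) with hlt | heq | hgt
      · -- left gap
        left; left
        have hgm : (g:ℕ) < m+1 := by have := q.isLt; omega
        set x : Fin (m+1) := ⟨(g:ℕ), hgm⟩ with hx
        have hBtwx : Btw (g:ℕ) (q:ℕ) (x:ℕ) := Or.inl ⟨le_refl _, hlt⟩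
        obtain ⟨c, hch, hxc, hall⟩ := keyL2 hT hval hBtwx
        have hB : ∀ y ∈ subtreeFinset H 0 c, (g:ℕ) ≤ (y:ℕ) ∧ (y:ℕ) < (q:ℕ) := by
          intro y hy
          have := hall y hy
          unfold Btw at this
          omega
        have hcmem : c ∈ CL := by
          rw [hCL, Finset.mem_filter]
          exact ⟨hch, Fin.lt_def.mpr (hB c (self_mem_subtree _ _)).2⟩
        rw [hVL, Finset.mem_image]
        refine ⟨c, hcmem, ?_⟩
        have hmineq : (minD H c : ℕ) = (g:ℕ) := by
          have h1 : (minD H c : ℕ) ≤ (x:ℕ) := Finset.min'_le _ _ hxc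
          have h2 := (hB _ (minD_mem c)).1
          simp only [hx] at h1
          omega
        ext
        simpa using hmineq
      · -- g = q
        right
        rw [hV0, if_pos (by omega)]
        exact Finset.mem_insert.mpr (Or.inl (by ext; simpa using heq))
      · rcases Nat.eq_or_lt_of_le hgt with heq1 | hgt1
        · -- g = q + 1
          right
          have hmem : g = q.succ := by ext; simpa using heq1.symm
          rw [hV0]
          by_cases h : 0 < (q:ℕ)
          · rw [if_pos h]
            exact Finset.mem_insert.mpr (Or.inr (Finset.mem_singleton.mpr hmem))
          · rw [if_neg h]
            exact Finset.mem_singleton.mpr hmem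
        · -- right gap
          left; right
          have hgm : (g:ℕ) - 1 < m+1 := by have := g.isLt; omega
          set x : Fin (m+1) := ⟨(g:ℕ) - 1, hgm⟩ with hx
          have hBtwx : Btw (g:ℕ) (q:ℕ) (x:ℕ) := Or.inr ⟨by simp [hx]; omega, by rw [hx]; dsimp only; omega⟩
          obtain ⟨c, hch, hxc, hall⟩ := keyL2 hT hval hBtwx
          have hB : ∀ y ∈ subtreeFinset H 0 c, (q:ℕ) < (y:ℕ) ∧ (y:ℕ) < (g:ℕ) := by
            intro y hy
            have := hall y hy
            unfold Btw at this
            omega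
          have hcmem : c ∈ CR := by
            rw [hCR, Finset.mem_filter]
            exact ⟨hch, Fin.lt_def.mpr (hB c (self_mem_subtree _ _)).1⟩
          rw [hVR, Finset.mem_image]
          refine ⟨c, hcmem, ?_⟩
          have hmaxeq : (maxD H c : ℕ) = (g:ℕ) - 1 := by
            have h1 : (x:ℕ) ≤ (maxD H c : ℕ) := Finset.le_max' _ _ hxc
            have h2 := (hB _ (maxD_mem c)).2
            simp only [hx] at h1
            omega
          ext
          simp only [Fin.val_succ]
          omega
    · intro hmem
      rcases hmem with (hg | hg) | hg
      · -- VL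
        rw [hVL, Finset.mem_image] at hg
        obtain ⟨c, hcmem, rfl⟩ := hg
        rw [hCL, Finset.mem_filter] at hcmem
        obtain ⟨hch, hclt⟩ := hcmem
        have hcltn : (c:ℕ) < (q:ℕ) := Fin.lt_def.mp hclt
        have hminle : (minD H c : ℕ) ≤ (c:ℕ) := Finset.min'_le _ _ (self_mem_subtree _ _)
        have hμne : (minD H c : ℕ) ≠ 0 := by
          intro h
          have h0 : minD H c = 0 := Fin.val_injective (by simpa using h)
          have := minD_mem (H := H) c
          rw [h0] at this
          exact ch_ne_zero hch ((root_mem_subtree hc).mp this)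
        constructor
        · simpa using Nat.pos_of_ne_zero hμne
        · have key : ∀ a b : Fin (m+1), H.Adj a b → a ≠ q → b ≠ q →
              Btw ((Fin.castSucc (minD H c)):ℕ) (q:ℕ) (a:ℕ) →
              Btw ((Fin.castSucc (minD H c)):ℕ) (q:ℕ) (b:ℕ) := by
            intro a b hadj ha hb hBa
            simp only [Fin.coe_castSucc] at hBa ⊢
            have hBa' : (minD H c : ℕ) ≤ (a:ℕ) ∧ (a:ℕ) < (q:ℕ) := by
              unfold Btw at hBa
              omega
            obtain ⟨c', hch', hac', hall⟩ := coverage_left hT hpl hch hBa'.1 hBa'.2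
            by_cases hbD : b ∈ subtreeFinset H 0 c'
            · exact Or.inl (hall b hbD)
            · obtain ⟨_, hbq⟩ := adj_leave_subtree hT (mem_ch.mp hch').1
                (mem_ch.mp hch').2 hac' hadj hbD
              exact absurd hbq hb
          intro a b hadj ha hb
          exact ⟨key a b hadj ha hb, key b a hadj.symm hb ha⟩
      · -- VR
        rw [hVR, Finset.mem_image] at hg
        obtain ⟨c, hcmem, rfl⟩ := hg
        rw [hCR, Finset.mem_filter] at hcmem
        obtain ⟨hch, hclt⟩ := hcmem
        have hcltn : (q:ℕ) < (c:ℕ) := Fin.lt_def.mp hclt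
        have hmaxge : (c:ℕ) ≤ (maxD H c : ℕ) := Finset.le_max' _ _ (self_mem_subtree _ _)
        constructor
        · simp
        · have key : ∀ a b : Fin (m+1), H.Adj a b → a ≠ q → b ≠ q →
              Btw (((maxD H c).succ):ℕ) (q:ℕ) (a:ℕ) →
              Btw (((maxD H c).succ):ℕ) (q:ℕ) (b:ℕ) := by
            intro a b hadj ha hb hBa
            simp only [Fin.val_succ] at hBa ⊢
            have hBa' : (q:ℕ) < (a:ℕ) ∧ (a:ℕ) ≤ (maxD H c : ℕ) := by
              unfold Btw at hBa
              omega
            obtain ⟨c', hch', hac', hall⟩ := coverage_right hT hpl hch hBa'.1 hBa'.2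
            by_cases hbD : b ∈ subtreeFinset H 0 c'
            · have := hall b hbD
              exact Or.inr ⟨this.1, by omega⟩
            · obtain ⟨_, hbq⟩ := adj_leave_subtree hT (mem_ch.mp hch').1
                (mem_ch.mp hch').2 hac' hadj hbD
              exact absurd hbq hb
          intro a b hadj ha hb
          exact ⟨key a b hadj ha hb, key b a hadj.symm hb ha⟩
      · -- V0
        have hval := hV0val g hg
        have hgpos : 0 < (g:ℕ) := by
          rcases hval with h | h
          · rw [hV0] at hg
            by_cases hq : 0 < (q:ℕ)
            · omega
            · rw [if_neg hq, Finset.mem_singleton] at hg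
              subst hg
              simp at h
          · omega
        refine ⟨hgpos, ?_⟩
        intro a b hadj ha hb
        have haq : (a:ℕ) ≠ (q:ℕ) := fun h => ha (by ext; simpa using h)
        have hbq : (b:ℕ) ≠ (q:ℕ) := fun h => hb (by ext; simpa using h)
        constructor
        · intro hB; exfalso; unfold Btw at hB; omega
        · intro hB; exfalso; unfold Btw at hB; omega
  rw [hseteq]
  -- cardinalities
  have hdisjLR : Disjoint VL VR := by
    rw [Finset.disjoint_left]
    intro g h1 h2
    have := hVLval g h1
    have := hVRval g h2
    omega
  have hdisj0 : Disjoint (VL ∪ VR) V0 := by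
    rw [Finset.disjoint_left]
    intro g h1 h2
    have h3 := hV0val g h2
    rcases Finset.mem_union.mp h1 with h | h
    · have := hVLval g h; omega
    · have := hVRval g h; omega
  rw [Finset.card_union_of_disjoint hdisj0, Finset.card_union_of_disjoint hdisjLR]
  have hVLcard : VL.card = CL.card := by
    rw [hVL]
    apply Finset.card_image_of_injOn
    intro c1 h1 c2 h2 heq
    have heq' : minD H c1 = minD H c2 := Fin.castSucc_inj.mp heq
    have h1' := Finset.mem_filter.mp (Finset.mem_coe.mp h1)
    have h2' := Finset.mem_filter.mp (Finset.mem_coe.mp h2)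
    exact child_subtree_disjoint hT (mem_ch.mp h1'.1).1 (mem_ch.mp h2'.1).1
      (mem_ch.mp h1'.1).2 (mem_ch.mp h2'.1).2 (minD_mem c1) (heq' ▸ minD_mem c2)
  have hVRcard : VR.card = CR.card := by
    rw [hVR]
    apply Finset.card_image_of_injOn
    intro c1 h1 c2 h2 heq
    have heq' : maxD H c1 = maxD H c2 := Fin.succ_inj.mp heq
    have h1' := Finset.mem_filter.mp (Finset.mem_coe.mp h1)
    have h2' := Finset.mem_filter.mp (Finset.mem_coe.mp h2)
    exact child_subtree_disjoint hT (mem_ch.mp h1'.1).1 (mem_ch.mp h2'.1).1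
      (mem_ch.mp h1'.1).2 (mem_ch.mp h2'.1).2 (maxD_mem c1) (heq' ▸ maxD_mem c2)
  have hV0card : V0.card = if 0 < (q:ℕ) then 2 else 1 := by
    rw [hV0]
    by_cases h : 0 < (q:ℕ)
    · rw [if_pos h, if_pos h]
      rw [Finset.card_insert_of_notMem, Finset.card_singleton]
      rw [Finset.mem_singleton]
      intro hcon
      have := congrArg Fin.val hcon
      simp at this
    · rw [if_neg h, if_neg h, Finset.card_singleton]
  have hCLR : CL.card + CR.card = (chFinset H q).card := by
    have hCR' : CR = (chFinset H q).filter (fun c => ¬ c < q) := by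
      rw [hCR]
      apply Finset.filter_congr
      intro c hch
      have hne : c ≠ q := (mem_ch.mp hch).1.ne'
      have : (c:ℕ) ≠ (q:ℕ) := fun h => hne (by ext; simpa using h)
      simp only [not_lt, Fin.lt_def, Fin.le_def, eq_iff_iff]
      omega
    rw [hCL, hCR']
    exact Finset.card_filter_add_card_filter_not _
  rw [hVLcard, hVRcard, hV0card, deg_eq hT q]
  by_cases h : 0 < (q:ℕ)
  · rw [if_pos h, if_pos h]; omega
  · rw [if_neg h, if_neg h]; omega

end PlanarAux
namespace PlanarAux

lemma succAbove_val {k : ℕ} (g : Fin (k+1)) (x : Fin k) :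
    ((g.succAbove x) : ℕ) = if (x:ℕ) < (g:ℕ) then (x:ℕ) else (x:ℕ) + 1 := by
  rw [Fin.succAbove]
  by_cases h : (x:ℕ) < (g:ℕ)
  · rw [if_pos (by simpa [Fin.lt_def] using h), if_pos h, Fin.coe_castSucc]
  · rw [if_neg (by simpa [Fin.lt_def] using h), if_neg h, Fin.val_succ]

/-- insert a new point `ℓ` at gap `g`, extending the arrangement `σ`. -/
def ins {k : ℕ} (ℓ g : Fin (k+1)) (σ : Equiv.Perm (Fin k)) : Equiv.Perm (Fin (k+1)) :=
  (finSuccEquiv' ℓ).trans ((Equiv.optionCongr σ).trans (finSuccEquiv' g).symm)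

@[simp] lemma ins_apply_ell {k : ℕ} (ℓ g : Fin (k+1)) (σ : Equiv.Perm (Fin k)) :
    ins ℓ g σ ℓ = g := by
  simp [ins, finSuccEquiv'_at]

@[simp] lemma ins_apply_succAbove {k : ℕ} (ℓ g : Fin (k+1)) (σ : Equiv.Perm (Fin k))
    (a : Fin k) : ins ℓ g σ (ℓ.succAbove a) = g.succAbove (σ a) := by
  simp [ins, finSuccEquiv'_succAbove, finSuccEquiv'_symm_some]

noncomputable def del {k : ℕ} (ℓ : Fin (k+1)) (τ : Equiv.Perm (Fin (k+1))) :
    Equiv.Perm (Fin k) :=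
  Equiv.removeNone ((finSuccEquiv' ℓ).symm.trans (τ.trans (finSuccEquiv' (τ ℓ))))

lemma del_spec {k : ℕ} (ℓ : Fin (k+1)) (τ : Equiv.Perm (Fin (k+1))) (a : Fin k) :
    (τ ℓ).succAbove (del ℓ τ a) = τ (ℓ.succAbove a) := by
  set e := (finSuccEquiv' ℓ).symm.trans (τ.trans (finSuccEquiv' (τ ℓ))) with he
  have hsome : ∃ x', e (some a) = some x' := by
    rcases h : e (some a) with _ | x'
    · exfalso
      rw [he] at h
      simp only [Equiv.trans_apply, finSuccEquiv'_symm_some] at h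
      have := (finSuccEquiv' (τ ℓ)).injective
      have h2 : τ (ℓ.succAbove a) = τ ℓ := by
        have h3 := h.trans (finSuccEquiv'_at (τ ℓ)).symm
        exact (finSuccEquiv' (τ ℓ)).injective h3
      exact Fin.succAbove_ne ℓ a (τ.injective h2)
    · exact ⟨x', rfl⟩
  have h1 : some (Equiv.removeNone e a) = e (some a) := Equiv.removeNone_some e hsome
  rw [he] at h1
  simp only [Equiv.trans_apply, finSuccEquiv'_symm_some] at h1
  have h2 := congrArg (finSuccEquiv' (τ ℓ)).symm h1
  rw [Equiv.symm_apply_apply, finSuccEquiv'_symm_some] at h2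
  rw [del, ← he, ← h2]

lemma ins_del {k : ℕ} (ℓ : Fin (k+1)) (τ : Equiv.Perm (Fin (k+1))) :
    ins ℓ (τ ℓ) (del ℓ τ) = τ := by
  apply Equiv.ext
  intro x
  rcases eq_or_ne x ℓ with rfl | hx
  · simp
  · obtain ⟨a, rfl⟩ := Fin.exists_succAbove_eq hx
    rw [ins_apply_succAbove, del_spec]

lemma del_ins {k : ℕ} (ℓ g : Fin (k+1)) (σ : Equiv.Perm (Fin k)) :
    del ℓ (ins ℓ g σ) = σ := by
  apply Equiv.ext
  intro a
  have h1 := del_spec ℓ (ins ℓ g σ) a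
  rw [ins_apply_succAbove, ins_apply_ell] at h1
  exact Fin.succAbove_right_injective h1

/-- the two crossing-pattern arithmetic lemmas -/
lemma cross_arith {Gv Q A B : ℕ} (hA : Btw Gv Q A) (hB : ¬ Btw Gv Q B)
    (hBQ : B ≠ Q) :
    ((if B < Gv then B else B+1) < Gv ∧ Gv < (if A < Gv then A else A+1) ∧
      (if A < Gv then A else A+1) < (if Q < Gv then Q else Q+1)) ∨
    ((if B < Gv then B else B+1) < (if Q < Gv then Q else Q+1) ∧
      (if Q < Gv then Q else Q+1) < (if A < Gv then A else A+1) ∧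
      (if A < Gv then A else A+1) < Gv) ∨
    (Gv < (if A < Gv then A else A+1) ∧
      (if A < Gv then A else A+1) < (if Q < Gv then Q else Q+1) ∧
      (if Q < Gv then Q else Q+1) < (if B < Gv then B else B+1)) ∨
    ((if Q < Gv then Q else Q+1) < (if A < Gv then A else A+1) ∧
      (if A < Gv then A else A+1) < Gv ∧ Gv < (if B < Gv then B else B+1)) := by
  unfold Btw at hA hB
  split_ifs <;> omega

lemma arith_toBtw {Gv Q A B : ℕ}
    (h : (Gv < (if A < Gv then A else A+1) ∧
          (if A < Gv then A else A+1) < (if Q < Gv then Q else Q+1) ∧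
          (if Q < Gv then Q else Q+1) < (if B < Gv then B else B+1)) ∨
         ((if Q < Gv then Q else Q+1) < (if A < Gv then A else A+1) ∧
          (if A < Gv then A else A+1) < Gv ∧ Gv < (if B < Gv then B else B+1)) ∨
         ((if B < Gv then B else B+1) < Gv ∧ Gv < (if A < Gv then A else A+1) ∧
          (if A < Gv then A else A+1) < (if Q < Gv then Q else Q+1)) ∨
         ((if B < Gv then B else B+1) < (if Q < Gv then Q else Q+1) ∧
          (if Q < Gv then Q else Q+1) < (if A < Gv then A else A+1) ∧
          (if A < Gv then A else A+1) < Gv)) :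
    Btw Gv Q A ∧ ¬ Btw Gv Q B := by
  unfold Btw
  split_ifs at h ⊢ <;> omega

end PlanarAux
namespace PlanarAux

lemma succAbove_lt_self_iff {k : ℕ} (g : Fin (k+1)) (x : Fin k) :
    g.succAbove x < g ↔ (x:ℕ) < (g:ℕ) := by
  rw [Fin.lt_def, succAbove_val]
  split_ifs with h <;> omega

lemma self_lt_succAbove_iff {k : ℕ} (g : Fin (k+1)) (x : Fin k) :
    g < g.succAbove x ↔ (g:ℕ) ≤ (x:ℕ) := by
  rw [Fin.lt_def, succAbove_val]
  split_ifs with h <;> omega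

lemma cross_arith' {Gv Q A B : ℕ} (hA : Btw Gv Q A) (hB : ¬ Btw Gv Q B) (hBQ : B ≠ Q) :
    (B < Gv ∧ Gv ≤ A ∧ A < Q) ∨ (B < Q ∧ Q < A ∧ A < Gv) ∨
    (Gv ≤ A ∧ A < Q ∧ Q < B) ∨ (Q < A ∧ A < Gv ∧ Gv ≤ B) := by
  unfold Btw at *; omega

lemma trans_iff {k : ℕ} {G : SimpleGraph (Fin (k+2))} {ℓ p0 : Fin (k+2)}
    (hdeg : ∀ y, G.Adj ℓ y ↔ y = p0)
    {r' p' : Fin (k+1)} (hp' : ℓ.succAbove p' = p0)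
    {σ : Equiv.Perm (Fin (k+1))}
    (hσpl : IsPlanarArr (G.comap (ℓ.succAbove)) σ) (hσr : σ r' = 0)
    (g : Fin (k+2)) :
    (IsPlanarArr G (ins ℓ g σ) ∧ ins ℓ g σ (ℓ.succAbove r') = 0) ↔
      (0 < (g:ℕ) ∧ ∀ a b : Fin (k+1), (G.comap (ℓ.succAbove)).Adj a b → a ≠ p' → b ≠ p' →
        (Btw (g:ℕ) ((σ p'):ℕ) ((σ a):ℕ) ↔ Btw (g:ℕ) ((σ p'):ℕ) ((σ b):ℕ))) := by
  set τ := ins ℓ g σ with hτdef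
  have hτℓ : τ ℓ = g := ins_apply_ell ℓ g σ
  have hτs : ∀ a : Fin (k+1), τ (ℓ.succAbove a) = g.succAbove (σ a) :=
    fun a => ins_apply_succAbove ℓ g σ a
  have hℓp : G.Adj ℓ p0 := (hdeg p0).mpr rfl
  have cmp1 : ∀ x : Fin (k+1), (τ (ℓ.succAbove x) < τ ℓ ↔ ((σ x:ℕ) < (g:ℕ))) := fun x => by
    rw [hτs x, hτℓ]; exact succAbove_lt_self_iff g (σ x)
  have cmp2 : ∀ x : Fin (k+1), (τ ℓ < τ (ℓ.succAbove x) ↔ ((g:ℕ) ≤ (σ x:ℕ))) := fun x => by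
    rw [hτs x, hτℓ]; exact self_lt_succAbove_iff g (σ x)
  have cmp3 : ∀ x y : Fin (k+1),
      (τ (ℓ.succAbove x) < τ (ℓ.succAbove y) ↔ ((σ x:ℕ) < (σ y:ℕ))) := fun x y => by
    rw [hτs x, hτs y, Fin.succAbove_lt_succAbove_iff, Fin.lt_def]
  have hpart1 : (τ (ℓ.succAbove r') = 0) ↔ 0 < (g:ℕ) := by
    rw [hτs r', hσr]
    constructor
    · intro h
      rcases Nat.eq_zero_or_pos (g:ℕ) with hg | hg
      · exfalso
        have hgz : g = 0 := Fin.val_injective (by simpa using hg)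
        rw [hgz] at h
        exact Fin.succAbove_ne 0 0 h
      · exact hg
    · intro hg
      apply Fin.val_injective
      rw [succAbove_val]
      have h0 : ((0 : Fin (k+1)) : ℕ) = 0 := rfl
      have h1 : ((0 : Fin (k+2)) : ℕ) = 0 := rfl
      rw [h0, h1, if_pos (by omega)]
  have hGadj : ∀ x y : Fin (k+2), G.Adj x y →
      (∃ a b : Fin (k+1), (G.comap (ℓ.succAbove)).Adj a b ∧
        x = ℓ.succAbove a ∧ y = ℓ.succAbove b)
      ∨ (x = ℓ ∧ y = p0) ∨ (x = p0 ∧ y = ℓ) := by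
    intro x y hxy
    rcases eq_or_ne x ℓ with rfl | hxℓ
    · exact Or.inr (Or.inl ⟨rfl, (hdeg y).mp hxy⟩)
    rcases eq_or_ne y ℓ with rfl | hyℓ
    · exact Or.inr (Or.inr ⟨(hdeg x).mp hxy.symm, rfl⟩)
    obtain ⟨a, rfl⟩ := Fin.exists_succAbove_eq hxℓ
    obtain ⟨b, rfl⟩ := Fin.exists_succAbove_eq hyℓ
    exact Or.inl ⟨a, b, hxy, rfl, rfl⟩
  constructor
  · rintro ⟨hpla, hr0⟩
    refine ⟨hpart1.mp hr0, ?_⟩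
    have key : ∀ a b : Fin (k+1), (G.comap (ℓ.succAbove)).Adj a b → a ≠ p' → b ≠ p' →
        Btw (g:ℕ) ((σ p'):ℕ) ((σ a):ℕ) → Btw (g:ℕ) ((σ p'):ℕ) ((σ b):ℕ) := by
      intro a b hab ha hb hBa
      by_contra hBb
      have hBQ : ((σ b):ℕ) ≠ ((σ p'):ℕ) := fun h =>
        hb (σ.injective (Fin.val_injective h))
      have hadjG : G.Adj (ℓ.succAbove a) (ℓ.succAbove b) := hab
      rcases cross_arith' hBa hBb hBQ with h | h | h | h
      · exact hpla (ℓ.succAbove b) (ℓ.succAbove a) ℓ p0 hadjG.symm hℓp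
          ⟨(cmp1 b).mpr h.1, (cmp2 a).mpr h.2.1, hp' ▸ (cmp3 a p').mpr h.2.2⟩
      · exact hpla (ℓ.succAbove b) (ℓ.succAbove a) p0 ℓ hadjG.symm hℓp.symm
          ⟨hp' ▸ (cmp3 b p').mpr h.1, hp' ▸ (cmp3 p' a).mpr h.2.1, (cmp1 a).mpr h.2.2⟩
      · exact hpla ℓ p0 (ℓ.succAbove a) (ℓ.succAbove b) hℓp hadjG
          ⟨(cmp2 a).mpr h.1, hp' ▸ (cmp3 a p').mpr h.2.1, hp' ▸ (cmp3 p' b).mpr h.2.2⟩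
      · exact hpla p0 ℓ (ℓ.succAbove a) (ℓ.succAbove b) hℓp.symm hadjG
          ⟨hp' ▸ (cmp3 p' a).mpr h.1, (cmp1 a).mpr h.2.1, (cmp2 b).mpr h.2.2⟩
    intro a b hab ha hb
    exact ⟨key a b hab ha hb, key b a hab.symm hb ha⟩
  · rintro ⟨hg0, hcond⟩
    refine ⟨?_, hpart1.mpr hg0⟩
    intro s t u v hst huv hpat
    obtain ⟨h1, h2, h3⟩ := hpat
    rcases hGadj s t hst with ⟨a1, b1, hab1, hs, ht⟩ | ⟨hs, ht⟩ | ⟨hs, ht⟩ <;>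
      rcases hGadj u v huv with ⟨a2, b2, hab2, hu, hv⟩ | ⟨hu, hv⟩ | ⟨hu, hv⟩
    · -- both images
      rw [hs, hu] at h1; rw [hu, ht] at h2; rw [ht, hv] at h3
      exact hσpl a1 b1 a2 b2 hab1 hab2
        ⟨Fin.lt_def.mpr ((cmp3 a1 a2).mp h1), Fin.lt_def.mpr ((cmp3 a2 b1).mp h2),
          Fin.lt_def.mpr ((cmp3 b1 b2).mp h3)⟩
    · -- st images, uv = (ℓ, p0)
      rw [hs, hu] at h1; rw [hu, ht] at h2; rw [ht, hv, ← hp'] at h3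
      rcases eq_or_ne b1 p' with hb1 | hb1
      · rw [hb1] at h3
        exact lt_irrefl _ h3
      · have f1 : ((σ a1):ℕ) < (g:ℕ) := (cmp1 a1).mp h1
        have f2 : (g:ℕ) ≤ ((σ b1):ℕ) := (cmp2 b1).mp h2
        have f3 : ((σ b1):ℕ) < ((σ p'):ℕ) := (cmp3 b1 p').mp h3
        rcases eq_or_ne a1 p' with ha1 | ha1
        · rw [ha1] at f1
          omega
        · have := (hcond a1 b1 hab1 ha1 hb1).mpr (Or.inl ⟨f2, f3⟩)
          unfold Btw at this
          omega
    · -- st images, uv = (p0, ℓ)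
      rw [hs, hu, ← hp'] at h1; rw [hu, ht, ← hp'] at h2; rw [ht, hv] at h3
      rcases eq_or_ne a1 p' with ha1 | ha1
      · rw [ha1] at h1
        exact lt_irrefl _ h1
      · rcases eq_or_ne b1 p' with hb1 | hb1
        · rw [hb1] at h2
          exact lt_irrefl _ h2
        · have f1 : ((σ a1):ℕ) < ((σ p'):ℕ) := (cmp3 a1 p').mp h1
          have f2 : ((σ p'):ℕ) < ((σ b1):ℕ) := (cmp3 p' b1).mp h2
          have f3 : ((σ b1):ℕ) < (g:ℕ) := (cmp1 b1).mp h3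
          have := (hcond a1 b1 hab1 ha1 hb1).mpr (Or.inr ⟨f2, f3⟩)
          unfold Btw at this
          omega
    · -- st = (ℓ,p0), uv images
      rw [hs, hu] at h1; rw [hu, ht, ← hp'] at h2; rw [ht, hv, ← hp'] at h3
      rcases eq_or_ne a2 p' with ha2 | ha2
      · rw [ha2] at h2
        exact lt_irrefl _ h2
      rcases eq_or_ne b2 p' with hb2 | hb2
      · rw [hb2] at h3
        exact lt_irrefl _ h3
      · have f1 : (g:ℕ) ≤ ((σ a2):ℕ) := (cmp2 a2).mp h1
        have f2 : ((σ a2):ℕ) < ((σ p'):ℕ) := (cmp3 a2 p').mp h2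
        have f3 : ((σ p'):ℕ) < ((σ b2):ℕ) := (cmp3 p' b2).mp h3
        have := (hcond a2 b2 hab2 ha2 hb2).mp (Or.inl ⟨f1, f2⟩)
        unfold Btw at this
        omega
    · -- st = (ℓ,p0), uv = (ℓ,p0)
      rw [hs, hu] at h1
      exact lt_irrefl _ h1
    · -- st = (ℓ,p0), uv = (p0,ℓ)
      rw [hu, ht] at h2
      exact lt_irrefl _ h2
    · -- st = (p0,ℓ), uv images
      rw [hs, hu, ← hp'] at h1; rw [hu, ht] at h2; rw [ht, hv] at h3
      rcases eq_or_ne a2 p' with ha2 | ha2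
      · rw [ha2] at h1
        exact lt_irrefl _ h1
      rcases eq_or_ne b2 p' with hb2 | hb2
      · rw [hb2] at h3
        have f1 : ((σ p'):ℕ) < ((σ a2):ℕ) := (cmp3 p' a2).mp h1
        have f2 : ((σ a2):ℕ) < (g:ℕ) := (cmp1 a2).mp h2
        have f3 : (g:ℕ) ≤ ((σ p'):ℕ) := (cmp2 p').mp h3
        omega
      · have f1 : ((σ p'):ℕ) < ((σ a2):ℕ) := (cmp3 p' a2).mp h1
        have f2 : ((σ a2):ℕ) < (g:ℕ) := (cmp1 a2).mp h2
        have f3 : (g:ℕ) ≤ ((σ b2):ℕ) := (cmp2 b2).mp h3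
        have := (hcond a2 b2 hab2 ha2 hb2).mp (Or.inr ⟨f1, f2⟩)
        unfold Btw at this
        omega
    · -- st = (p0,ℓ), uv = (ℓ,p0)
      rw [hu, ht] at h2
      exact lt_irrefl _ h2
    · -- st = (p0,ℓ), uv = (p0,ℓ)
      rw [hs, hu] at h1
      exact lt_irrefl _ h1

end PlanarAux
namespace PlanarAux

open SimpleGraph

/-- transfer `IsTree` along a graph isomorphism. -/
lemma isTree_of_iso {V W : Type*} {A : SimpleGraph V} {B : SimpleGraph W}
    (e : A ≃g B) (h : B.IsTree) : A.IsTree := by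
  refine ⟨e.connected_iff.mpr h.isConnected, ?_⟩
  intro v c hc
  exact h.IsAcyclic (c.map e.toHom)
    ((SimpleGraph.Walk.map_isCycle_iff_of_injective e.toEquiv.injective).mpr hc)

lemma degree_of_iso {V W : Type*} [Fintype V] [Fintype W] [DecidableEq V] [DecidableEq W]
    {A : SimpleGraph V} {B : SimpleGraph W} [DecidableRel A.Adj] [DecidableRel B.Adj]
    (e : A ≃g B) (v : V) : A.degree v = B.degree (e v) := by
  rw [← SimpleGraph.card_neighborSet_eq_degree, ← SimpleGraph.card_neighborSet_eq_degree]
  exact Fintype.card_congr (e.mapNeighborSet v)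

/-- second vertex of a nontrivial walk. -/
lemma start_adj_mem {V : Type*} {G : SimpleGraph V} {u v : V} (p : G.Walk u v) (h : u ≠ v) :
    ∃ w, G.Adj u w ∧ w ∈ p.support := by
  cases p with
  | nil => exact absurd rfl h
  | cons h' q => exact ⟨_, h', by simp⟩

/-- a path between vertices other than the leaf `ℓ` avoids `ℓ`. -/
lemma path_avoids_leaf {V : Type*} {G : SimpleGraph V} {ℓ p0 : V}
    (hdeg : ∀ y, G.Adj ℓ y ↔ y = p0) {x y : V} (hx : x ≠ ℓ) (hy : y ≠ ℓ)
    (P : G.Walk x y) (hP : P.IsPath) : ℓ ∉ P.support := by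
  intro hmem
  obtain ⟨q, rr, rfl⟩ := SimpleGraph.Walk.mem_support_iff_exists_append.mp hmem
  obtain ⟨w1, hw1adj, hw1mem⟩ := start_adj_mem q.reverse (Ne.symm hx)
  obtain ⟨w2, hw2adj, hw2mem⟩ := start_adj_mem rr (Ne.symm hy)
  rw [SimpleGraph.Walk.support_reverse, List.mem_reverse] at hw1mem
  have hw1p : w1 = p0 := (hdeg w1).mp hw1adj
  have hw2p : w2 = p0 := (hdeg w2).mp hw2adj
  have hp0ℓ : p0 ≠ ℓ := fun h => (SimpleGraph.irrefl G) (h ▸ (hdeg p0).mpr rfl)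
  have hw2tail : w2 ∈ rr.support.tail := by
    have hsupp := SimpleGraph.Walk.support_eq_cons rr
    rw [hsupp] at hw2mem
    rcases List.mem_cons.mp hw2mem with h | h
    · exact absurd (hw2p.symm.trans h ▸ rfl : p0 = ℓ) (h ▸ hp0ℓ)
    · rw [hsupp]; exact h
  have hnodup := hP.support_nodup
  rw [SimpleGraph.Walk.support_append] at hnodup
  have hdisj := List.disjoint_of_nodup_append hnodup
  exact hdisj (hw1p ▸ hw1mem) (hw2p ▸ hw2tail)

/-- transfer a walk avoiding `ℓ` into the comap graph. -/
lemma walk_comap {k : ℕ} {G : SimpleGraph (Fin (k+2))} {ℓ : Fin (k+2)} :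
    ∀ {x y : Fin (k+2)} (p : G.Walk x y), ℓ ∉ p.support →
    ∀ {a b : Fin (k+1)}, x = ℓ.succAbove a → y = ℓ.succAbove b →
    (G.comap (ℓ.succAbove)).Reachable a b := by
  intro x y p
  induction p with
  | nil =>
    intro _ a b hxa hyb
    have : a = b := Fin.succAbove_right_injective (hxa.symm.trans hyb)
    exact this ▸ Reachable.refl a
  | @cons u v w h q ih =>
    intro hℓ a b hxa hyb
    rw [SimpleGraph.Walk.support_cons] at hℓ
    have hℓ1 : ℓ ∉ q.support := fun hm => hℓ (List.mem_cons_of_mem _ hm)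
    have hvℓ : v ≠ ℓ := fun hm => hℓ (List.mem_cons_of_mem _ (hm ▸ SimpleGraph.Walk.start_mem_support q))
    obtain ⟨c, hc⟩ := Fin.exists_succAbove_eq hvℓ
    have hadj : (G.comap (ℓ.succAbove)).Adj a c := by
      show G.Adj (ℓ.succAbove a) (ℓ.succAbove c)
      rw [← hxa, hc]
      exact h
    exact (hadj.reachable).trans (ih hℓ1 hc.symm hyb)

end PlanarAux
namespace PlanarAux

open SimpleGraph Finset

noncomputable def planar1 {n : ℕ} (G : SimpleGraph (Fin n)) (r : Fin n) :
    Finset (Equiv.Perm (Fin n)) :=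
  Finset.univ.filter (fun π => IsPlanarArr G π ∧ ((π r : Fin n) : ℕ) = 0)

lemma mem_planar1 {n : ℕ} {G : SimpleGraph (Fin n)} {r : Fin n} {π : Equiv.Perm (Fin n)} :
    π ∈ planar1 G r ↔ IsPlanarArr G π ∧ ((π r : Fin n) : ℕ) = 0 := by
  simp [planar1]

lemma exists_leaf {k : ℕ} {G : SimpleGraph (Fin (k+2))} (hT : G.IsTree) (r : Fin (k+2)) :
    ∃ ℓ, ℓ ≠ r ∧ G.degree ℓ = 1 := by
  classical
  have hedge : G.edgeFinset.card = k + 1 := by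
    have := hT.card_edgeFinset
    simpa using this
  have hsum : ∑ v, G.degree v = 2 * (k+1) := by
    rw [SimpleGraph.sum_degrees_eq_twice_card_edges, hedge]
  have hpos : ∀ v : Fin (k+2), 0 < G.degree v := by
    intro v
    rw [SimpleGraph.degree_pos_iff_exists_adj]
    obtain ⟨w, hw⟩ := exists_ne v
    obtain ⟨p⟩ := hT.isConnected.preconnected v w
    cases p with
    | nil => exact absurd rfl hw
    | cons h q => exact ⟨_, h⟩
  by_contra hcon
  push_neg at hcon
  have h2 : ∀ v : Fin (k+2), v ≠ r → 2 ≤ G.degree v := by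
    intro v hv
    have ha := hpos v
    have hb := hcon v hv
    omega
  have hsplit : ∑ v, G.degree v
      = G.degree r + ∑ v ∈ Finset.univ.erase r, G.degree v :=
    (Finset.add_sum_erase _ _ (Finset.mem_univ r)).symm
  have hge : (Finset.univ.erase r).card * 2 ≤ ∑ v ∈ Finset.univ.erase r, G.degree v := by
    have := Finset.card_nsmul_le_sum (Finset.univ.erase r) (fun v => G.degree v) 2
      (fun x hx => h2 x (Finset.mem_erase.mp hx).1)
    simpa [smul_eq_mul] using this
  have hcard : (Finset.univ.erase r).card = k + 1 := by
    rw [Finset.card_erase_of_mem (Finset.mem_univ r)]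
    simp
  have hr := hpos r
  rw [hcard] at hge
  omega

lemma comap_isTree {k : ℕ} {G : SimpleGraph (Fin (k+2))} (hT : G.IsTree)
    {ℓ p0 : Fin (k+2)} (hdeg : ∀ y, G.Adj ℓ y ↔ y = p0) :
    (G.comap (ℓ.succAbove)).IsTree := by
  constructor
  · rw [SimpleGraph.connected_iff]
    refine ⟨?_, ⟨0⟩⟩
    intro a b
    obtain ⟨p⟩ := hT.isConnected.preconnected (ℓ.succAbove a) (ℓ.succAbove b)
    have havoid : ℓ ∉ (p.toPath : G.Walk _ _).support :=
      path_avoids_leaf hdeg (Fin.succAbove_ne ℓ a) (Fin.succAbove_ne ℓ b) _ p.toPath.2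
    exact walk_comap _ havoid rfl rfl
  · intro v c hc
    have hinj : Function.Injective
        (SimpleGraph.Embedding.comap (⟨ℓ.succAbove, Fin.succAbove_right_injective⟩ :
          Fin (k+1) ↪ Fin (k+2)) G).toHom := Fin.succAbove_right_injective
    exact hT.IsAcyclic (c.map _)
      ((SimpleGraph.Walk.map_isCycle_iff_of_injective hinj).mpr hc)

lemma comap_degree {k : ℕ} {G : SimpleGraph (Fin (k+2))} {ℓ p0 : Fin (k+2)}
    (hdeg : ∀ y, G.Adj ℓ y ↔ y = p0) (a : Fin (k+1)) :
    G.degree (ℓ.succAbove a) = (G.comap (ℓ.succAbove)).degree a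
      + (if ℓ.succAbove a = p0 then 1 else 0) := by
  classical
  have himg : ((G.comap (ℓ.succAbove)).neighborFinset a).image (ℓ.succAbove)
      = (G.neighborFinset (ℓ.succAbove a)).erase ℓ := by
    ext y
    simp only [Finset.mem_image, SimpleGraph.mem_neighborFinset, Finset.mem_erase]
    constructor
    · rintro ⟨b, hb, rfl⟩
      exact ⟨Fin.succAbove_ne ℓ b, hb⟩
    · rintro ⟨hyℓ, hy⟩
      obtain ⟨b, rfl⟩ := Fin.exists_succAbove_eq hyℓ
      exact ⟨b, hy, rfl⟩
  have hcard : (G.comap (ℓ.succAbove)).degree a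
      = ((G.neighborFinset (ℓ.succAbove a)).erase ℓ).card := by
    rw [← himg]
    rw [Finset.card_image_of_injective _ Fin.succAbove_right_injective]
    rfl
  by_cases hmem : ℓ.succAbove a = p0
  · rw [if_pos hmem]
    have hℓmem : ℓ ∈ G.neighborFinset (ℓ.succAbove a) := by
      rw [SimpleGraph.mem_neighborFinset]
      exact (((hdeg _).mpr hmem).symm)
    rw [hcard, Finset.card_erase_of_mem hℓmem]
    have hpos : 0 < G.degree (ℓ.succAbove a) := by
      rw [← SimpleGraph.card_neighborFinset_eq_degree]
      exact Finset.card_pos.mpr ⟨ℓ, hℓmem⟩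
    rw [← SimpleGraph.card_neighborFinset_eq_degree]
    rw [← SimpleGraph.card_neighborFinset_eq_degree] at hpos
    omega
  · rw [if_neg hmem]
    have hℓnot : ℓ ∉ G.neighborFinset (ℓ.succAbove a) := by
      rw [SimpleGraph.mem_neighborFinset]
      intro hadj
      exact hmem ((hdeg _).mp hadj.symm)
    rw [hcard, Finset.erase_eq_of_notMem hℓnot,
      SimpleGraph.card_neighborFinset_eq_degree]
    omega

end PlanarAux
namespace PlanarAux

open SimpleGraph Finset

lemma fiber_card {k : ℕ} {G : SimpleGraph (Fin (k+2))} (hT : G.IsTree)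
    {ℓ p0 r : Fin (k+2)} (hdeg : ∀ y, G.Adj ℓ y ↔ y = p0)
    {r' p' : Fin (k+1)} (hr' : ℓ.succAbove r' = r) (hp' : ℓ.succAbove p' = p0)
    (hT' : (G.comap (ℓ.succAbove)).IsTree)
    (σ : Equiv.Perm (Fin (k+1))) :
    (Finset.univ.filter (fun g : Fin (k+2) => ins ℓ g σ ∈ planar1 G r)).card
      = if σ ∈ planar1 (G.comap (ℓ.succAbove)) r' then G.degree p0 else 0 := by
  classical
  have hmem : ∀ g : Fin (k+2), (ins ℓ g σ ∈ planar1 G r ↔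
      (IsPlanarArr G (ins ℓ g σ) ∧ ins ℓ g σ (ℓ.succAbove r') = 0)) := by
    intro g
    rw [mem_planar1, ← hr']
    constructor
    · rintro ⟨h1, h2⟩
      exact ⟨h1, Fin.val_injective (by simpa using h2)⟩
    · rintro ⟨h1, h2⟩
      exact ⟨h1, by rw [h2]; rfl⟩
  by_cases hσ : σ ∈ planar1 (G.comap (ℓ.succAbove)) r'
  · rw [if_pos hσ]
    obtain ⟨hσpl, hσrv⟩ := mem_planar1.mp hσ
    have hσr0 : σ r' = 0 := Fin.val_injective (by simpa using hσrv)
    set H := (G.comap (ℓ.succAbove)).comap (⇑σ.symm) with hH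
    have hiso : H ≃g (G.comap (ℓ.succAbove)) := ⟨σ.symm, Iff.rfl⟩
    have hTH : H.IsTree := isTree_of_iso hiso hT'
    have hplH : NoCross H := by
      intro a b c d hab hcd h1 h2 h3
      refine hσpl (σ.symm a) (σ.symm b) (σ.symm c) (σ.symm d) hab hcd ?_
      simp only [Equiv.apply_symm_apply]
      exact ⟨h1, h2, h3⟩
    have hdegH : H.degree (σ p') = (G.comap (ℓ.succAbove)).degree p' := by
      rw [← SimpleGraph.card_neighborFinset_eq_degree,
        ← SimpleGraph.card_neighborFinset_eq_degree]
      refine Finset.card_bij' (fun y _ => σ.symm y) (fun b _ => σ b) ?_ ?_ ?_ ?_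
      · intro y hy
        rw [SimpleGraph.mem_neighborFinset] at hy ⊢
        have h2 : (G.comap (ℓ.succAbove)).Adj (σ.symm (σ p')) (σ.symm y) := hy
        rwa [Equiv.symm_apply_apply] at h2
      · intro b hb
        rw [SimpleGraph.mem_neighborFinset] at hb ⊢
        show (G.comap (ℓ.succAbove)).Adj (σ.symm (σ p')) (σ.symm (σ b))
        rw [Equiv.symm_apply_apply, Equiv.symm_apply_apply]
        exact hb
      · intro y hy
        show σ (σ.symm y) = y
        exact Equiv.apply_symm_apply σ y
      · intro b hb
        show σ.symm (σ b) = b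
        exact Equiv.symm_apply_apply σ b
    have heq : (Finset.univ.filter (fun g : Fin (k+2) => ins ℓ g σ ∈ planar1 G r))
        = Finset.univ.filter (fun g : Fin (k+2) => ValidGap H (σ p') g) := by
      apply Finset.filter_congr
      intro g _
      rw [hmem g, trans_iff hdeg hp' hσpl hσr0 g]
      unfold ValidGap
      constructor
      · rintro ⟨hg, hcnd⟩
        refine ⟨hg, ?_⟩
        intro A B hAB hA hB
        have hA' : σ.symm A ≠ p' := fun h => hA (h ▸ (Equiv.apply_symm_apply σ A).symm)
        have hB' : σ.symm B ≠ p' := fun h => hB (h ▸ (Equiv.apply_symm_apply σ B).symm)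
        have := hcnd (σ.symm A) (σ.symm B) hAB hA' hB'
        simpa [Equiv.apply_symm_apply] using this
      · rintro ⟨hg, hcnd⟩
        refine ⟨hg, ?_⟩
        intro a b hab ha hb
        have hab' : H.Adj (σ a) (σ b) := by
          show (G.comap (ℓ.succAbove)).Adj (σ.symm (σ a)) (σ.symm (σ b))
          simpa [Equiv.symm_apply_apply] using hab
        exact hcnd (σ a) (σ b) hab' (fun h => ha (σ.injective h)) (fun h => hb (σ.injective h))
    rw [heq, core_count hTH hplH (σ p')]
    convert_to (G.comap (ℓ.succAbove)).degree p' + 1 = G.degree p0 using 2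
    · convert hdegH
    have hcd := comap_degree hdeg p'
    rw [hp', if_pos rfl] at hcd
    omega
  · rw [if_neg hσ, Finset.card_eq_zero]
    rw [Finset.eq_empty_iff_forall_notMem]
    intro g hg
    obtain ⟨hτpl, hτr⟩ := (hmem g).mp (Finset.mem_filter.mp hg).2
    apply hσ
    rw [mem_planar1]
    constructor
    · intro a b c d hab hcd hpat
      obtain ⟨h1, h2, h3⟩ := hpat
      refine hτpl (ℓ.succAbove a) (ℓ.succAbove b) (ℓ.succAbove c) (ℓ.succAbove d) hab hcd
        ⟨?_, ?_, ?_⟩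
      · rw [ins_apply_succAbove, ins_apply_succAbove, Fin.succAbove_lt_succAbove_iff]
        exact h1
      · rw [ins_apply_succAbove, ins_apply_succAbove, Fin.succAbove_lt_succAbove_iff]
        exact h2
      · rw [ins_apply_succAbove, ins_apply_succAbove, Fin.succAbove_lt_succAbove_iff]
        exact h3
    · have h2 := congrArg Fin.val hτr
      rw [ins_apply_succAbove] at h2
      rw [succAbove_val] at h2
      have h0 : ((0 : Fin (k+2)) : ℕ) = 0 := rfl
      rw [h0] at h2
      split_ifs at h2 <;> omega

theorem planar1_card : ∀ (k : ℕ) (G : SimpleGraph (Fin (k+1))), G.IsTree →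
    ∀ r : Fin (k+1), (planar1 G r).card = ∏ u, (G.degree u).factorial := by
  intro k
  induction k with
  | zero =>
    intro G hT r
    haveI hsub : Subsingleton (Fin (0+1)) := ⟨fun a b => Fin.ext (by omega)⟩
    have hdeg0 : ∀ u : Fin 1, G.degree u = 0 := by
      intro u
      rw [← SimpleGraph.card_neighborFinset_eq_degree, Finset.card_eq_zero,
        Finset.eq_empty_iff_forall_notMem]
      intro w hw
      rw [SimpleGraph.mem_neighborFinset] at hw
      exact (G.ne_of_adj hw) (Subsingleton.elim u w)
    have huniv : planar1 G r = Finset.univ := by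
      ext π
      simp only [mem_planar1, Finset.mem_univ, iff_true]
      constructor
      · intro s t u v hst _ _
        exact absurd (Subsingleton.elim s t) (G.ne_of_adj hst)
      · have hr := r.isLt
        have := (π r).isLt
        omega
    rw [huniv]
    rw [Finset.card_univ]
    simp [hdeg0, Fintype.card_perm]
  | succ k ih =>
    intro G hT r
    classical
    obtain ⟨ℓ, hℓr, hdeg1⟩ := exists_leaf hT r
    obtain ⟨p0, hp0⟩ := Finset.card_eq_one.mp
      (show (G.neighborFinset ℓ).card = 1 by
        rw [SimpleGraph.card_neighborFinset_eq_degree]; exact hdeg1)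
    have hdeg : ∀ y, G.Adj ℓ y ↔ y = p0 := fun y => by
      rw [← SimpleGraph.mem_neighborFinset, hp0, Finset.mem_singleton]
    have hT' : (G.comap (ℓ.succAbove)).IsTree := comap_isTree hT hdeg
    obtain ⟨r', hr'⟩ := Fin.exists_succAbove_eq (Ne.symm hℓr)
    have hℓp0 : G.Adj ℓ p0 := (hdeg p0).mpr rfl
    have hp0ℓ : p0 ≠ ℓ := fun h => G.irrefl (h ▸ hℓp0)
    obtain ⟨p', hp'⟩ := Fin.exists_succAbove_eq hp0ℓ
    have h1 : (planar1 G r).card =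
        (Finset.univ.filter (fun gp : Fin (k+2) × Equiv.Perm (Fin (k+1)) =>
          ins ℓ gp.1 gp.2 ∈ planar1 G r)).card := by
      refine Finset.card_bij' (fun τ _ => (τ ℓ, del ℓ τ))
        (fun gp _ => ins ℓ gp.1 gp.2) ?_ ?_ ?_ ?_
      · intro τ hτ
        simp only [Finset.mem_filter, Finset.mem_univ, true_and]
        rw [ins_del]
        exact hτ
      · intro gp hgp
        exact (Finset.mem_filter.mp hgp).2
      · intro τ hτ
        show ins ℓ (τ ℓ) (del ℓ τ) = τ
        exact ins_del ℓ τ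
      · intro gp hgp
        show (ins ℓ gp.1 gp.2 ℓ, del ℓ (ins ℓ gp.1 gp.2)) = gp
        rw [ins_apply_ell, del_ins]
    have h2 : (Finset.univ.filter (fun gp : Fin (k+2) × Equiv.Perm (Fin (k+1)) =>
          ins ℓ gp.1 gp.2 ∈ planar1 G r)).card
        = ∑ σ : Equiv.Perm (Fin (k+1)),
            (Finset.univ.filter (fun g : Fin (k+2) => ins ℓ g σ ∈ planar1 G r)).card := by
      rw [Finset.card_eq_sum_card_fiberwise (f := fun gp => gp.2) (t := Finset.univ)
        (fun x _ => Finset.mem_univ _)]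
      apply Finset.sum_congr rfl
      intro σ _
      have hmemfib : ∀ gp : Fin (k+2) × Equiv.Perm (Fin (k+1)),
          (gp ∈ (Finset.univ.filter (fun gp : Fin (k+2) × Equiv.Perm (Fin (k+1)) =>
            ins ℓ gp.1 gp.2 ∈ planar1 G r)).filter (fun x => x.2 = σ)
            ↔ (ins ℓ gp.1 gp.2 ∈ planar1 G r ∧ gp.2 = σ)) := by
        intro gp
        rw [Finset.mem_filter, Finset.mem_filter]
        simp
      refine Finset.card_bij' (fun gp _ => gp.1) (fun g _ => (g, σ)) ?_ ?_ ?_ ?_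
      · intro gp hgp
        obtain ⟨hins, heqσ⟩ := (hmemfib gp).mp hgp
        rw [Finset.mem_filter]
        refine ⟨Finset.mem_univ _, ?_⟩
        show ins ℓ gp.1 σ ∈ planar1 G r
        rw [← heqσ]
        exact hins
      · intro g hg
        exact (hmemfib _).mpr ⟨(Finset.mem_filter.mp hg).2, rfl⟩
      · intro gp hgp
        show (gp.1, σ) = gp
        exact Prod.ext rfl ((hmemfib gp).mp hgp).2.symm
      · intro g hg
        rfl
    have h3 : ∀ σ : Equiv.Perm (Fin (k+1)),
        (Finset.univ.filter (fun g : Fin (k+2) => ins ℓ g σ ∈ planar1 G r)).card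
          = if σ ∈ planar1 (G.comap (ℓ.succAbove)) r' then G.degree p0 else 0 :=
      fun σ => fiber_card hT hdeg hr' hp' hT' σ
    have hdegp0 : G.degree p0 = (G.comap ℓ.succAbove).degree p' + 1 := by
      have hcd := comap_degree hdeg p'
      rw [hp', if_pos rfl] at hcd
      omega
    have hprod : ∏ u : Fin (k+2), (G.degree u).factorial
        = G.degree p0 * ∏ a : Fin (k+1), ((G.comap ℓ.succAbove).degree a).factorial := by
      rw [Fin.prod_univ_succAbove (fun u => (G.degree u).factorial) ℓ]
      rw [hdeg1, Nat.factorial_one, one_mul]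
      rw [← Finset.mul_prod_erase Finset.univ
        (fun a => (G.degree (ℓ.succAbove a)).factorial) (Finset.mem_univ p')]
      rw [← Finset.mul_prod_erase Finset.univ
        (fun a => ((G.comap ℓ.succAbove).degree a).factorial) (Finset.mem_univ p')]
      have herase : ∏ a ∈ Finset.univ.erase p', (G.degree (ℓ.succAbove a)).factorial
          = ∏ a ∈ Finset.univ.erase p', ((G.comap ℓ.succAbove).degree a).factorial := by
        apply Finset.prod_congr rfl
        intro a ha
        have hane : a ≠ p' := (Finset.mem_erase.mp ha).1
        have hcd := comap_degree hdeg a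
        rw [if_neg (fun h => hane (Fin.succAbove_right_injective (h.trans hp'.symm)))] at hcd
        rw [hcd, Nat.add_zero]
      rw [hp', hdegp0, Nat.factorial_succ, herase]
      ring
    rw [h1, h2]
    rw [Finset.sum_congr rfl (fun σ _ => h3 σ)]
    rw [Finset.sum_ite_mem, Finset.univ_inter, Finset.sum_const, smul_eq_mul]
    rw [ih (G.comap ℓ.succAbove) hT' r']
    rw [hprod]
    rw [mul_comm]; congr!

end PlanarAux

/-- The number of planar arrangements of a free tree equals `n · ∏_u deg(u)!`. -/
theorem card_planarSet (n : ℕ) (G : SimpleGraph (Fin n)) (hT : G.IsTree) :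
    (planarSet G).card = n * ∏ u : Fin n, (G.degree u).factorial := by
  classical
  cases n with
  | zero =>
    obtain ⟨x⟩ := hT.isConnected.nonempty
    exact x.elim0
  | succ m =>
    have hpart : (planarSet G).card = ∑ r : Fin (m+1), (PlanarAux.planar1 G r).card := by
      rw [Finset.card_eq_sum_card_fiberwise (f := fun π => π.symm 0) (t := Finset.univ)
        (fun x _ => Finset.mem_univ _)]
      apply Finset.sum_congr rfl
      intro r _
      congr 1
      ext π
      simp only [planarSet, PlanarAux.planar1, Finset.mem_filter, Finset.mem_univ, true_and]
      constructor
      · rintro ⟨h1, h2⟩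
        refine ⟨h1, ?_⟩
        rw [← h2, Equiv.apply_symm_apply]
        rfl
      · rintro ⟨h1, h2⟩
        refine ⟨h1, ?_⟩
        have h3 : π r = 0 := Fin.val_injective (by simpa using h2)
        rw [← h3, Equiv.symm_apply_apply]
    rw [hpart, Finset.sum_congr rfl (fun r _ => PlanarAux.planar1_card m G hT r),
      Finset.sum_const, Finset.card_univ, Fintype.card_fin, smul_eq_mul]
end
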